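/- arXiv:1802.02850 — 4 statements merged into one kernel-verified Lean document; each statement's English description precedes it below -/
import Mathlib

section
/- (Exponential characterization of the output distribution induced by the optimum attack channel; the key estimate behind Theorem 5.) Let A be a nonempty finite set, d : A × A → ℝ nonnegative with d(a,a) = 0 for all a (extended additively to sequences), P a strictly positive PMF on A, Δ ≥ 0 and n ≥ 1. Let A*_Δ be the channel defined below and let Q*(y) = ∑_{x∈A^n} (∏_{i=1}^n P(x_i)) · A*_Δ(y|x). Then for every y ∈ A^n, (n+1)^{−2|A|²} · exp( −n·( Ĥ(y) + D̃ⁿ_Δ(y,P) ) ) ≤ Q*(y) ≤ (n+1)^{|A|²} · exp( −n·( Ĥ(y) + D̃ⁿ_Δ(y,P) ) ), where Ĥ(y) = −∑_{a : P̂_y(a)>0} P̂_y(a)·ln P̂_y(a) is the empirical entropy of y and D̃ⁿ_Δ(y,P) = min_{x ∈ A^n : d(x,y) ≤ nΔ} D(P̂_x ‖ P). -/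
open scoped Classical
open Finset Filter

set_option maxHeartbeats 1000000

noncomputable section

/-- A probability mass function on a finite alphabet, as a real-valued function. -/
def IsPMF {A : Type} [Fintype A] (P : A → ℝ) : Prop :=
  (∀ a, 0 ≤ P a) ∧ ∑ a, P a = 1

/-- Kullback--Leibler divergence `D(Q‖P) = ∑_{a : Q a > 0} Q a · ln (Q a / P a)`. -/
def klDiv {A : Type} [Fintype A] (Q P : A → ℝ) : ℝ :=
  ∑ a, if 0 < Q a then Q a * Real.log (Q a / P a) else 0

/-- First marginal of a joint PMF on `A × A`. -/
def margX {A : Type} [Fintype A] (Q : A × A → ℝ) : A → ℝ := fun a => ∑ b, Q (a, b)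

/-- Second marginal of a joint PMF on `A × A`. -/
def margY {A : Type} [Fintype A] (Q : A × A → ℝ) : A → ℝ := fun b => ∑ a, Q (a, b)

/-- Expected distortion of a joint PMF. -/
def expDist {A : Type} [Fintype A] (d : A → A → ℝ) (Q : A × A → ℝ) : ℝ :=
  ∑ q : A × A, Q q * d q.1 q.2

/-- Generalized divergence `D̃_Δ(P_Y, P)`: minimum of `D(Q_X‖P)` over joint PMFs `Q`
with second marginal `P_Y` and expected distortion at most `Δ`. -/
def Dtilde {A : Type} [Fintype A] (d : A → A → ℝ) (Δ : ℝ) (PY P : A → ℝ) : ℝ :=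
  sInf {v | ∃ Q : A × A → ℝ,
    IsPMF Q ∧ margY Q = PY ∧ expDist d Q ≤ Δ ∧ v = klDiv (margX Q) P}

/-- Earth mover distance between two PMFs. -/
def EMD {A : Type} [Fintype A] (d : A → A → ℝ) (P P' : A → ℝ) : ℝ :=
  sInf {v | ∃ R : A × A → ℝ,
    IsPMF R ∧ margX R = P ∧ margY R = P' ∧ v = expDist d R}

/-- Memoryless (product) probability of a sequence. -/
def seqProb {A : Type} {n : ℕ} (P : A → ℝ) (x : Fin n → A) : ℝ := ∏ i, P (x i)

/-- Additive extension of a per-letter distortion to sequences. -/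
def dSeq {A : Type} {n : ℕ} (d : A → A → ℝ) (x y : Fin n → A) : ℝ := ∑ i, d (x i) (y i)

/-- Empirical PMF (type) of a sequence. -/
def empP {A : Type} [Fintype A] [DecidableEq A] {n : ℕ} (x : Fin n → A) : A → ℝ :=
  fun a => ((univ.filter fun i => x i = a).card : ℝ) / (n : ℝ)

/-- Empirical entropy of a sequence. -/
def empEnt {A : Type} [Fintype A] [DecidableEq A] {n : ℕ} (y : Fin n → A) : ℝ :=
  -∑ a, if 0 < empP y a then empP y a * Real.log (empP y a) else 0

/-- Conditional type class `T(y|x)`. -/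
def condTypeClass {A : Type} [Fintype A] [DecidableEq A] {n : ℕ} (x y : Fin n → A) :
    Finset (Fin n → A) :=
  univ.filter fun y' => ∀ a b : A,
    (univ.filter fun i => x i = a ∧ y' i = b).card
      = (univ.filter fun i => x i = a ∧ y i = b).card

/-- Number of distinct conditional type classes `T(y|x)` arising from `y` with
`dn x y ≤ n·Δ`. -/
def numCondTypes {A : Type} [Fintype A] [DecidableEq A] {n : ℕ}
    (dn : (Fin n → A) → (Fin n → A) → ℝ) (Δ : ℝ) (x : Fin n → A) : ℕ :=
  ((univ.filter fun y => dn x y ≤ (n : ℝ) * Δ).image fun y => condTypeClass x y).card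

/-- The optimal attack channel `A*_Δ(y|x) = c_n(x)/|T(y|x)|` on admissible `y`,
and `0` otherwise; here `c_n(x)` is the reciprocal of the number of admissible
conditional type classes. -/
def Astar {A : Type} [Fintype A] [DecidableEq A] {n : ℕ}
    (dn : (Fin n → A) → (Fin n → A) → ℝ) (Δ : ℝ) (x y : Fin n → A) : ℝ :=
  if dn x y ≤ (n : ℝ) * Δ then
    ((numCondTypes dn Δ x : ℝ))⁻¹ / ((condTypeClass x y).card : ℝ)
  else 0

/-- A channel on `A^n`: `W x y` is the conditional probability of output `y` given input `x`. -/
def IsChannel {A : Type} [Fintype A] {n : ℕ}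
    (W : (Fin n → A) → (Fin n → A) → ℝ) : Prop :=
  (∀ x y, 0 ≤ W x y) ∧ ∀ x, ∑ y, W x y = 1

/-- The class `C_Δ` of admissible channels: those assigning zero probability to any
`y` with `dn x y > n·Δ`. -/
def InC {A : Type} [Fintype A] {n : ℕ}
    (dn : (Fin n → A) → (Fin n → A) → ℝ) (Δ : ℝ)
    (W : (Fin n → A) → (Fin n → A) → ℝ) : Prop :=
  IsChannel W ∧ ∀ x y, (n : ℝ) * Δ < dn x y → W x y = 0

/-- False positive probability: `Φ y` is the probability of deciding `H₁` given `y`. -/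
def PFP {A : Type} [Fintype A] {n : ℕ} (P0 : A → ℝ) (Φ : (Fin n → A) → ℝ)
    (A0 : (Fin n → A) → (Fin n → A) → ℝ) : ℝ :=
  ∑ x, ∑ y, seqProb P0 x * A0 x y * Φ y

/-- False negative probability. -/
def PFN {A : Type} [Fintype A] {n : ℕ} (P1 : A → ℝ) (Φ : (Fin n → A) → ℝ)
    (A1 : (Fin n → A) → (Fin n → A) → ℝ) : ℝ :=
  ∑ x, ∑ y, seqProb P1 x * A1 x y * (1 - Φ y)

/-- Sequence-level generalized divergence
`D̃ⁿ_Δ(y,P) = min_{x : d(x,y) ≤ nΔ} D(P̂_x‖P)`. -/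
def DtildeN {A : Type} [Fintype A] [DecidableEq A] {n : ℕ} (d : A → A → ℝ) (Δ : ℝ)
    (y : Fin n → A) (P : A → ℝ) : ℝ :=
  sInf {v | ∃ x : Fin n → A, dSeq d x y ≤ (n : ℝ) * Δ ∧ v = klDiv (empP x) P}

set_option linter.unusedSectionVars false
namespace QstarAux

variable {B : Type} [Fintype B] [DecidableEq B] {n : ℕ}

/-- number of occurrences of a letter. -/
def cnt (w : Fin n → B) (b : B) : ℕ := (univ.filter fun i => w i = b).card

/-- (unconditional) type class. -/
def typeCls (w : Fin n → B) : Finset (Fin n → B) :=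
  univ.filter fun w' => ∀ b, cnt w' b = cnt w b

lemma mem_typeCls {w w' : Fin n → B} : w' ∈ typeCls w ↔ ∀ b, cnt w' b = cnt w b := by
  simp [typeCls]

lemma self_mem_typeCls (w : Fin n → B) : w ∈ typeCls w := mem_typeCls.2 fun _ => rfl

lemma typeCls_card_pos (w : Fin n → B) : 0 < (typeCls w).card :=
  Finset.card_pos.2 ⟨w, self_mem_typeCls w⟩

lemma sum_cnt (w : Fin n → B) : ∑ b, cnt w b = n := by
  classical
  have := (Finset.card_eq_sum_card_fiberwise (s := (univ : Finset (Fin n)))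
      (f := w) (t := univ) (fun i _ => Finset.mem_univ (w i)))
  simpa [cnt] using this.symm

lemma cnt_le (w : Fin n → B) (b : B) : cnt w b ≤ n := by
  simpa [cnt] using Finset.card_filter_le (univ : Finset (Fin n)) (fun i => w i = b)

lemma card_filter_comp (σ : Equiv.Perm (Fin n)) (p : Fin n → Prop)
    [DecidablePred fun i => p (σ i)] [DecidablePred p] :
    (univ.filter fun i => p (σ i)).card = (univ.filter fun i => p i).card := by
  apply Finset.card_bij (fun i _ => σ i)
  · intro i hi; simp only [Finset.mem_filter, Finset.mem_univ, true_and] at hi ⊢; exact hi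
  · intro i _ j _ h; exact σ.injective h
  · intro j hj
    refine ⟨σ.symm j, ?_, by simp⟩
    simp only [Finset.mem_filter, Finset.mem_univ, true_and] at hj ⊢
    simpa using hj

lemma cnt_comp_perm (σ : Equiv.Perm (Fin n)) (w : Fin n → B) (b : B) :
    cnt (w ∘ σ) b = cnt w b := by
  exact card_filter_comp σ (fun i => w i = b)

/-- fiberwise product. -/
lemma prod_fiberwise_f (w : Fin n → B) (f : B → ℝ) :
    ∏ i, f (w i) = ∏ b, f b ^ cnt w b := by
  classical
  rw [← Finset.prod_fiberwise' (univ : Finset (Fin n)) w f]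
  exact Finset.prod_congr rfl fun b _ => by rw [Finset.prod_const, cnt]

lemma sum_fiberwise_f (w : Fin n → B) (f : B → ℝ) :
    ∑ i, f (w i) = ∑ b, (cnt w b : ℝ) * f b := by
  classical
  rw [← Finset.sum_fiberwise' (univ : Finset (Fin n)) w f]
  exact Finset.sum_congr rfl fun b _ => by rw [Finset.sum_const, cnt, nsmul_eq_mul]

/-- two sequences with the same counts are permutations of each other. -/
lemma exists_perm {w w' : Fin n → B} (h : ∀ b, cnt w' b = cnt w b) :
    ∃ σ : Equiv.Perm (Fin n), w' = w ∘ σ := by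
  classical
  have e : ∀ b, { i // w' i = b } ≃ { i // w i = b } := by
    intro b
    apply Fintype.equivOfCardEq
    rw [Fintype.card_subtype, Fintype.card_subtype]
    exact h b
  refine ⟨Equiv.ofFiberEquiv e, ?_⟩
  funext i
  exact (Equiv.ofFiberEquiv_map e i).symm

end QstarAux

namespace QstarAux

variable {B : Type} [Fintype B] [DecidableEq B] {n : ℕ}

lemma stab_card_le (w v : Fin n → B) :
    ((univ : Finset (Equiv.Perm (Fin n))).filter fun σ : Equiv.Perm (Fin n) => w ∘ ⇑σ = v).card
      ≤ ∏ b, (cnt w b).factorial := by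
  classical
  rcases (univ.filter fun σ : Equiv.Perm (Fin n) => w ∘ ⇑σ = v).eq_empty_or_nonempty with h | h
  · rw [h]; simpa using Nat.zero_le _
  · obtain ⟨σ₀, hσ₀⟩ := h
    simp only [Finset.mem_filter, Finset.mem_univ, true_and] at hσ₀
    have h1 : (univ.filter fun σ : Equiv.Perm (Fin n) => w ∘ ⇑σ = v).card
        ≤ (univ.filter fun τ : Equiv.Perm (Fin n) => w ∘ ⇑τ = w).card := by
      apply Finset.card_le_card_of_injOn (fun σ => σ * σ₀⁻¹)
      · intro σ hσ
        simp only [Finset.mem_filter, Finset.mem_univ, true_and,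
          Finset.coe_filter] at hσ ⊢
        funext i
        have h2 : w (σ (σ₀⁻¹ i)) = v (σ₀⁻¹ i) := congrFun hσ _
        have h3 : w (σ₀ (σ₀⁻¹ i)) = v (σ₀⁻¹ i) := congrFun hσ₀ _
        simp only [Function.comp_apply, Equiv.Perm.mul_apply,
          (fun x => σ₀.apply_symm_apply x : ∀ x, σ₀ (σ₀⁻¹ x) = x)] at h3 ⊢
        rw [h2, ← h3]
        simp
      · intro a _ b _ hab
        exact mul_right_cancel hab
    refine h1.trans ?_
    have key : Fintype.card {τ : Equiv.Perm (Fin n) // w ∘ ⇑τ = w}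
        ≤ Fintype.card (∀ b, Equiv.Perm {i : Fin n // w i = b}) := by
      apply Fintype.card_le_of_injective
        (fun τ => fun b => Equiv.Perm.subtypePerm τ.1
          (fun i => by
            constructor
            · intro hi; rw [← hi]; exact (congrFun τ.2 i).symm
            · intro hi; rw [← hi]; exact (congrFun τ.2 i)))
      intro τ τ' h
      apply Subtype.ext
      apply Equiv.ext
      intro i
      have := congrFun h (w i)
      have h2 := congrArg (fun e => (e ⟨i, rfl⟩ : {j : Fin n // w j = w i}).1) this
      simpa using h2
    have hc1 : (univ.filter fun τ : Equiv.Perm (Fin n) => w ∘ ⇑τ = w).card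
        = Fintype.card {τ : Equiv.Perm (Fin n) // w ∘ ⇑τ = w} := by
      rw [Fintype.card_subtype]
    have hc2 : Fintype.card (∀ b, Equiv.Perm {i : Fin n // w i = b})
        = ∏ b, (cnt w b).factorial := by
      rw [Fintype.card_pi]
      refine Finset.prod_congr rfl fun b _ => ?_
      rw [Fintype.card_perm, Fintype.card_subtype]
      rfl
    rw [hc1, ← hc2]
    exact key

lemma factorial_le_typeCls (w : Fin n → B) :
    n.factorial ≤ (typeCls w).card * ∏ b, (cnt w b).factorial := by
  classical
  have himg : (univ.image fun σ : Equiv.Perm (Fin n) => w ∘ ⇑σ) ⊆ typeCls w := by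
    intro v hv
    obtain ⟨σ, _, rfl⟩ := Finset.mem_image.1 hv
    exact mem_typeCls.2 fun b => cnt_comp_perm σ w b
  have h := Finset.card_le_mul_card_image (f := fun σ : Equiv.Perm (Fin n) => w ∘ ⇑σ)
    univ (∏ b, (cnt w b).factorial) (fun v _ => stab_card_le w v)
  have hcard : (univ : Finset (Equiv.Perm (Fin n))).card = n.factorial := by
    simp [Finset.card_univ, Fintype.card_perm]
  calc n.factorial = (univ : Finset (Equiv.Perm (Fin n))).card := hcard.symm
    _ ≤ (∏ b, (cnt w b).factorial) * (univ.image fun σ : Equiv.Perm (Fin n) => w ∘ ⇑σ).card := h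
    _ ≤ (∏ b, (cnt w b).factorial) * (typeCls w).card :=
        Nat.mul_le_mul_left _ (Finset.card_le_card himg)
    _ = (typeCls w).card * ∏ b, (cnt w b).factorial := Nat.mul_comm _ _

lemma pow_le_exp_mul_factorial (k : ℕ) :
    (k : ℝ) ^ k ≤ Real.exp k * k.factorial := by
  have h := Real.sum_le_exp_of_nonneg (x := (k : ℝ)) (by positivity) (k + 1)
  have h1 : (k : ℝ) ^ k / k.factorial ≤ Real.exp k := by
    refine le_trans ?_ h
    exact Finset.single_le_sum (f := fun i => (k : ℝ) ^ i / i.factorial)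
      (fun i _ => by positivity) (Finset.self_mem_range_succ k)
  have h2 : (0 : ℝ) < k.factorial := by exact_mod_cast k.factorial_pos
  calc (k : ℝ) ^ k = (k : ℝ) ^ k / k.factorial * k.factorial := by field_simp
    _ ≤ Real.exp k * k.factorial := by
        exact mul_le_mul_of_nonneg_right h1 h2.le

lemma factorial_le_stirling (k : ℕ) (hk : 1 ≤ k) :
    (k.factorial : ℝ) ≤ Real.exp 1 * Real.sqrt k * ((k : ℝ) / Real.exp 1) ^ k := by
  obtain ⟨m, rfl⟩ : ∃ m, k = m + 1 := ⟨k - 1, (Nat.succ_pred_eq_of_pos hk).symm⟩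
  have h := Stirling.stirlingSeq'_antitone (Nat.zero_le m)
  have h1 : Stirling.stirlingSeq (m + 1) ≤ Real.exp 1 / Real.sqrt 2 := by
    simpa [Stirling.stirlingSeq_one] using h
  have hkpos : (0 : ℝ) < (m + 1 : ℕ) := by positivity
  have hden : (0 : ℝ) < Real.sqrt (2 * (m + 1 : ℕ)) * (((m + 1 : ℕ) : ℝ) / Real.exp 1) ^ (m + 1) := by
    positivity
  rw [Stirling.stirlingSeq, div_le_iff₀ hden] at h1
  refine h1.trans (le_of_eq ?_)
  have hs2 : Real.sqrt (2 * ((m + 1 : ℕ) : ℝ)) = Real.sqrt 2 * Real.sqrt ((m + 1 : ℕ)) :=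
    Real.sqrt_mul (by norm_num) _
  have hsqrt2 : Real.sqrt 2 ≠ 0 := by positivity
  rw [hs2]
  field_simp

end QstarAux



namespace QstarAux

variable {B : Type} [Fintype B] [DecidableEq B] {n : ℕ}

lemma empP_eq (w : Fin n → B) (b : B) : empP w b = (cnt w b : ℝ) / n := rfl

lemma empP_nonneg (w : Fin n → B) (b : B) : 0 ≤ empP w b := by
  rw [empP_eq]; positivity

lemma cnt_eq_zero_of_not_pos (hn : 1 ≤ n) {w : Fin n → B} {b : B}
    (h : ¬ 0 < empP w b) : cnt w b = 0 := by
  rw [empP_eq] at h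
  have hn' : (0 : ℝ) < n := by exact_mod_cast hn
  by_contra hc
  exact h (div_pos (by exact_mod_cast Nat.pos_of_ne_zero hc) hn')

lemma empP_pos_iff (hn : 1 ≤ n) (w : Fin n → B) (b : B) :
    0 < empP w b ↔ 0 < cnt w b := by
  constructor
  · intro h
    by_contra hc
    have : cnt w b = 0 := by omega
    rw [empP_eq, this] at h
    simp at h
  · intro h
    rw [empP_eq]
    have hn' : (0 : ℝ) < n := by exact_mod_cast hn
    exact div_pos (by exact_mod_cast h) hn'

lemma n_mul_empP (hn : 1 ≤ n) (w : Fin n → B) (b : B) :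
    (n : ℝ) * empP w b = cnt w b := by
  have hn' : (n : ℝ) ≠ 0 := by
    have : (0 : ℝ) < n := by exact_mod_cast hn
    exact this.ne'
  rw [empP_eq]
  field_simp

lemma sum_empP (hn : 1 ≤ n) (w : Fin n → B) : ∑ b, empP w b = 1 := by
  have hn' : (n : ℝ) ≠ 0 := by
    have : (0 : ℝ) < n := by exact_mod_cast hn
    exact this.ne'
  have : ∑ b, empP w b = (↑(∑ b, cnt w b) : ℝ) / n := by
    rw [Nat.cast_sum, Finset.sum_div]
    rfl
  rw [this, sum_cnt, div_self hn']

lemma exp_sum_cnt_log (hn : 1 ≤ n) (w : Fin n → B) (f : B → ℝ)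
    (hf : ∀ b, 0 < cnt w b → 0 < f b) :
    Real.exp (∑ b, if 0 < empP w b then (cnt w b : ℝ) * Real.log (f b) else 0)
      = ∏ b, f b ^ cnt w b := by
  rw [Real.exp_sum]
  refine Finset.prod_congr rfl fun b _ => ?_
  by_cases h : 0 < empP w b
  · rw [if_pos h]
    have hc : 0 < cnt w b := (empP_pos_iff hn w b).1 h
    rw [← Real.exp_log (hf b hc), Real.log_exp, Real.exp_nat_mul]
  · rw [if_neg h, cnt_eq_zero_of_not_pos hn h, pow_zero, Real.exp_zero]

lemma seqProb_eq_prod (Pd : B → ℝ) (w : Fin n → B) :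
    seqProb Pd w = ∏ b, Pd b ^ cnt w b := prod_fiberwise_f w Pd

lemma seqProb_nonneg (Pd : B → ℝ) (h : ∀ b, 0 ≤ Pd b) (w : Fin n → B) :
    0 ≤ seqProb Pd w := Finset.prod_nonneg fun i _ => h _

lemma seqProb_eq_exp (hn : 1 ≤ n) (P : B → ℝ) (hP : ∀ b, 0 < P b) (w : Fin n → B) :
    seqProb P w = Real.exp (-(n : ℝ) * (empEnt w + klDiv (empP w) P)) := by
  have key : -(n : ℝ) * (empEnt w + klDiv (empP w) P)
      = ∑ b, if 0 < empP w b then (cnt w b : ℝ) * Real.log (P b) else 0 := by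
    rw [empEnt, klDiv,
      show ∀ S T : ℝ, -(n : ℝ) * (-S + T) = (n : ℝ) * S - (n : ℝ) * T from
        fun S T => by ring,
      Finset.mul_sum, Finset.mul_sum, ← Finset.sum_sub_distrib]
    refine Finset.sum_congr rfl fun b _ => ?_
    by_cases h : 0 < empP w b
    · have hnp := n_mul_empP hn w b
      rw [if_pos h, if_pos h, if_pos h, Real.log_div h.ne' (hP b).ne']
      calc (n : ℝ) * (empP w b * Real.log (empP w b))
            - (n : ℝ) * (empP w b * (Real.log (empP w b) - Real.log (P b)))
          = ((n : ℝ) * empP w b) * Real.log (P b) := by ring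
        _ = (cnt w b : ℝ) * Real.log (P b) := by rw [hnp]
    · simp [if_neg h]
  rw [key, exp_sum_cnt_log hn w P (fun b _ => hP b), seqProb_eq_prod]

lemma seqProb_empP_self (hn : 1 ≤ n) (w : Fin n → B) :
    seqProb (empP w) w = Real.exp (-(n : ℝ) * empEnt w) := by
  have key : -(n : ℝ) * empEnt w
      = ∑ b, if 0 < empP w b then (cnt w b : ℝ) * Real.log (empP w b) else 0 := by
    rw [empEnt,
      show ∀ S : ℝ, -(n : ℝ) * -S = (n : ℝ) * S from fun S => by ring,
      Finset.mul_sum]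
    refine Finset.sum_congr rfl fun b _ => ?_
    by_cases h : 0 < empP w b
    · have hnp := n_mul_empP hn w b
      rw [if_pos h, if_pos h]
      calc (n : ℝ) * (empP w b * Real.log (empP w b))
          = ((n : ℝ) * empP w b) * Real.log (empP w b) := by ring
        _ = (cnt w b : ℝ) * Real.log (empP w b) := by rw [hnp]
    · simp [if_neg h]
  rw [key, exp_sum_cnt_log hn w (empP w) (fun b hb => (empP_pos_iff hn w b).2 hb),
    seqProb_eq_prod]

lemma sum_seqProb (Q : B → ℝ) : ∑ w : Fin n → B, seqProb Q w = (∑ b, Q b) ^ n := by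
  classical
  have h := Finset.prod_univ_sum (t := fun _ : Fin n => (univ : Finset B))
    (f := fun _ b => Q b)
  rw [Fintype.piFinset_univ] at h
  simp only [seqProb]
  rw [← h]
  simp

lemma typeCls_card_le_exp (hn : 1 ≤ n) (w : Fin n → B) :
    ((typeCls w).card : ℝ) ≤ Real.exp ((n : ℝ) * empEnt w) := by
  have h1 : ∀ w' ∈ typeCls w, seqProb (empP w) w' = Real.exp (-(n : ℝ) * empEnt w) := by
    intro w' hw'
    rw [seqProb_eq_prod,
      Finset.prod_congr rfl (fun b _ => by rw [mem_typeCls.1 hw' b]),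
      ← seqProb_eq_prod, seqProb_empP_self hn w]
  have key : ((typeCls w).card : ℝ) * Real.exp (-(n : ℝ) * empEnt w) ≤ 1 := by
    calc ((typeCls w).card : ℝ) * Real.exp (-(n : ℝ) * empEnt w)
        = ∑ w' ∈ typeCls w, seqProb (empP w) w' := by
          rw [Finset.sum_congr rfl h1, Finset.sum_const, nsmul_eq_mul]
      _ ≤ ∑ w' : Fin n → B, seqProb (empP w) w' :=
          Finset.sum_le_sum_of_subset_of_nonneg (Finset.subset_univ _)
            (fun w' _ _ => seqProb_nonneg _ (empP_nonneg w) w')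
      _ = 1 := by rw [sum_seqProb, sum_empP hn w, one_pow]
  have hexp : (0 : ℝ) < Real.exp (-((n : ℝ) * empEnt w)) := Real.exp_pos _
  rw [neg_mul] at key
  have h2 := (le_div_iff₀ hexp).2 key
  rwa [one_div, Real.exp_neg, inv_inv] at h2

end QstarAux



namespace QstarAux

variable {B : Type} [Fintype B] [DecidableEq B] {n : ℕ}

lemma sum_supp_cnt (w : Fin n → B) :
    ∑ b ∈ (univ.filter fun b => 0 < cnt w b), cnt w b = n := by
  have h := Finset.sum_filter_of_ne (s := univ) (f := fun b => cnt w b)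
    (p := fun b => 0 < cnt w b) (fun b _ hb => Nat.pos_of_ne_zero hb)
  rw [h, sum_cnt]

lemma prod_supp_factorial (w : Fin n → B) :
    ∏ b ∈ (univ.filter fun b => 0 < cnt w b), (cnt w b).factorial
      = ∏ b, (cnt w b).factorial := by
  apply Finset.prod_filter_of_ne
  intro b _ h
  by_contra hc
  have : cnt w b = 0 := by omega
  rw [this] at h
  exact h rfl

lemma exp_n_empEnt_eq (hn : 1 ≤ n) (w : Fin n → B) :
    Real.exp ((n : ℝ) * empEnt w)
      = ∏ b ∈ (univ.filter fun b => 0 < cnt w b),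
          ((n : ℝ) / (cnt w b)) ^ (cnt w b) := by
  have hn' : (0 : ℝ) < n := by exact_mod_cast hn
  have key : (n : ℝ) * empEnt w
      = ∑ b, if 0 < cnt w b then (cnt w b : ℝ) * Real.log ((n : ℝ) / (cnt w b)) else 0 := by
    rw [empEnt, mul_neg, Finset.mul_sum, ← Finset.sum_neg_distrib]
    refine Finset.sum_congr rfl fun b _ => ?_
    by_cases h : 0 < empP w b
    · have hc := (empP_pos_iff hn w b).1 h
      have hc' : (0 : ℝ) < cnt w b := by exact_mod_cast hc
      rw [if_pos h, if_pos hc]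
      have hnp := n_mul_empP hn w b
      have hlog : Real.log ((n : ℝ) / (cnt w b)) = -Real.log (empP w b) := by
        rw [empP_eq, ← Real.log_inv, inv_div]
      rw [hlog]
      calc -((n : ℝ) * (empP w b * Real.log (empP w b)))
          = ((n : ℝ) * empP w b) * -Real.log (empP w b) := by ring
        _ = (cnt w b : ℝ) * -Real.log (empP w b) := by rw [hnp]
    · have hc : cnt w b = 0 := cnt_eq_zero_of_not_pos hn h
      rw [if_neg h, if_neg (by omega), mul_zero, neg_zero]
  rw [key, ← Finset.sum_filter, Real.exp_sum]
  refine Finset.prod_congr rfl fun b hb => ?_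
  have hc : 0 < cnt w b := (Finset.mem_filter.1 hb).2
  have hpos : (0 : ℝ) < (n : ℝ) / (cnt w b) := by
    apply div_pos hn'
    exact_mod_cast hc
  rw [← Real.exp_log hpos, Real.log_exp, Real.exp_nat_mul]

lemma Lbound (supp : Finset B) (m : B → ℕ) (hm : ∀ b ∈ supp, 1 ≤ m b)
    (hsum : ∑ b ∈ supp, m b = n) (hk : 2 ≤ supp.card) (hn : 1 ≤ n) :
    ∏ b ∈ supp, (Real.exp 1 * Real.sqrt (m b))
      ≤ ((n : ℝ) + 1) ^ (Fintype.card B ^ 2 - Fintype.card B) := by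
  set c := Fintype.card B with hc
  have hkc : supp.card ≤ c := by
    simpa [hc] using Finset.card_le_card (Finset.subset_univ supp)
  have hc2 : 2 ≤ c := le_trans hk hkc
  have hmn : ∀ b ∈ supp, m b ≤ n := by
    intro b hb
    rw [← hsum]
    exact Finset.single_le_sum (fun i _ => Nat.zero_le _) hb
  have hn1 : (1 : ℝ) ≤ (n : ℝ) + 1 := by
    have : (0 : ℝ) ≤ n := by positivity
    linarith
  have hLnonneg : 0 ≤ ∏ b ∈ supp, (Real.exp 1 * Real.sqrt (m b)) :=
    Finset.prod_nonneg fun b _ => by positivity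
  have hsq : (∏ b ∈ supp, (Real.exp 1 * Real.sqrt (m b))) ^ 2
      = ∏ b ∈ supp, (Real.exp 1 ^ 2 * (m b : ℝ)) := by
    rw [← Finset.prod_pow]
    refine Finset.prod_congr rfl fun b _ => ?_
    rw [mul_pow, Real.sq_sqrt (by positivity : (0:ℝ) ≤ (m b : ℝ))]
  have hmain : ∏ b ∈ supp, (Real.exp 1 ^ 2 * (m b : ℝ))
      ≤ ((n : ℝ) + 1) ^ ((c ^ 2 - c) * 2) := by
    by_cases hcase : c = 2
    · have hk2 : supp.card = 2 := le_antisymm (hcase ▸ hkc) hk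
      obtain ⟨b₁, b₂, hne, rfl⟩ := Finset.card_eq_two.1 hk2
      rw [Finset.prod_pair hne]
      have hsum2 : m b₁ + m b₂ = n := by
        rw [← hsum, Finset.sum_pair hne]
      have hE : (c ^ 2 - c) * 2 = 4 := by rw [hcase]; norm_num
      rw [hE]
      have he : Real.exp 1 ≤ 2.7182818286 := Real.exp_one_lt_d9.le
      have he0 : (0:ℝ) < Real.exp 1 := Real.exp_pos 1
      have hx : (1 : ℝ) ≤ m b₁ := by exact_mod_cast hm b₁ (by simp)
      have hy : (1 : ℝ) ≤ m b₂ := by exact_mod_cast hm b₂ (by simp)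
      have hxy : (m b₁ : ℝ) + (m b₂ : ℝ) = (n : ℝ) := by exact_mod_cast hsum2
      have he' : Real.exp 1 ≤ 2.72 := by linarith
      have he2 : Real.exp 1 ^ 2 ≤ 7.4 := by nlinarith [he', he0]
      have h4 : Real.exp 1 ^ 4 ≤ 56 := by nlinarith [he2, he0, pow_pos he0 2]
      have hprod : (4:ℝ) * ((m b₁ : ℝ) * (m b₂ : ℝ)) ≤ (n : ℝ) ^ 2 := by
        nlinarith [sq_nonneg ((m b₁ : ℝ) - (m b₂ : ℝ)), hxy]
      have h16 : 16 * (n:ℝ)^2 ≤ ((n:ℝ)+1)^4 := by nlinarith [sq_nonneg ((n:ℝ)-1), sq_nonneg ((n:ℝ)+1)]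
      have hxypos : (0:ℝ) < (m b₁ : ℝ) * (m b₂ : ℝ) := by nlinarith
      calc Real.exp 1 ^ 2 * (m b₁ : ℝ) * (Real.exp 1 ^ 2 * (m b₂ : ℝ))
          = Real.exp 1 ^ 4 * ((m b₁ : ℝ) * (m b₂ : ℝ)) := by ring
        _ ≤ 56 * ((m b₁ : ℝ) * (m b₂ : ℝ)) := mul_le_mul_of_nonneg_right h4 hxypos.le
        _ ≤ 14 * (n:ℝ)^2 := by linarith [hprod]
        _ ≤ ((n:ℝ)+1)^4 := by nlinarith [h16, sq_nonneg (n:ℝ)]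
    · have hc3 : 3 ≤ c := by omega
      have he : Real.exp 1 ≤ 2.7182818286 := Real.exp_one_lt_d9.le
      have he0 : (0:ℝ) < Real.exp 1 := Real.exp_pos 1
      calc ∏ b ∈ supp, (Real.exp 1 ^ 2 * (m b : ℝ))
          ≤ ∏ b ∈ supp, ((n : ℝ) + 1) ^ 3 := by
            apply Finset.prod_le_prod (fun b _ => by positivity)
            intro b hb
            have hmn' : (m b : ℝ) ≤ (n : ℝ) := by exact_mod_cast hmn b hb
            have hnn : (1 : ℝ) ≤ (n : ℝ) := by exact_mod_cast hn
            have hm0 : (0 : ℝ) ≤ (m b : ℝ) := by positivity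
            have he2 : Real.exp 1 ^ 2 ≤ 7.4 := by nlinarith [he, he0]
            have hstep : Real.exp 1 ^ 2 * (m b : ℝ) ≤ 7.4 * (m b : ℝ) :=
              mul_le_mul_of_nonneg_right he2 hm0
            have h7n : 7.4 * (n : ℝ) ≤ ((n : ℝ) + 1) ^ 3 := by
              nlinarith [hnn, sq_nonneg ((n:ℝ) - 1), sq_nonneg (n:ℝ)]
            nlinarith [hstep, h7n, hmn']
        _ = ((n : ℝ) + 1) ^ (3 * supp.card) := by
            rw [Finset.prod_const, ← pow_mul, mul_comm]
        _ ≤ ((n : ℝ) + 1) ^ ((c ^ 2 - c) * 2) := by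
            apply pow_le_pow_right₀ hn1
            have hd : c ^ 2 = c * c := sq c
            have h5 : 5 * c ≤ 2 * (c * c) := by nlinarith
            have hcc : c ≤ c * c := Nat.le_mul_of_pos_left c (by omega)
            omega
  have hfin : (∏ b ∈ supp, (Real.exp 1 * Real.sqrt (m b))) ^ 2
      ≤ (((n : ℝ) + 1) ^ (c ^ 2 - c)) ^ 2 := by
    rw [hsq, ← pow_mul]
    exact hmain
  have := Real.sqrt_le_sqrt hfin
  rwa [Real.sqrt_sq hLnonneg, Real.sqrt_sq (by positivity)] at this

lemma typeCls_card_ge (hn : 1 ≤ n) (w : Fin n → B) :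
    Real.exp ((n : ℝ) * empEnt w)
      ≤ ((typeCls w).card : ℝ)
        * ((n : ℝ) + 1) ^ (Fintype.card B ^ 2 - Fintype.card B) := by
  classical
  set supp := univ.filter fun b => 0 < cnt w b with hsuppdef
  have hsum : ∑ b ∈ supp, cnt w b = n := sum_supp_cnt w
  have hcard1 : (1 : ℝ) ≤ (typeCls w).card := by exact_mod_cast typeCls_card_pos w
  have hpow1 : (1 : ℝ) ≤ ((n : ℝ) + 1) ^ (Fintype.card B ^ 2 - Fintype.card B) := by
    have h0 : (0 : ℝ) ≤ n := by positivity
    calc (1:ℝ) = 1 ^ (Fintype.card B ^ 2 - Fintype.card B) := (one_pow _).symm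
      _ ≤ ((n : ℝ) + 1) ^ (Fintype.card B ^ 2 - Fintype.card B) :=
          pow_le_pow_left₀ zero_le_one (by linarith) _
  by_cases hk1 : supp.card ≤ 1
  · have hE : empEnt w = 0 := by
      rw [empEnt]
      rw [Finset.sum_congr rfl (fun b _ => ?_), Finset.sum_const_zero, neg_zero]
      by_cases h : 0 < empP w b
      · rw [if_pos h]
        have hb : b ∈ supp := by
          rw [hsuppdef]
          simp only [Finset.mem_filter, Finset.mem_univ, true_and]
          exact (empP_pos_iff hn w b).1 h
        have hsingle : supp = {b} := by
          apply Finset.eq_singleton_iff_unique_mem.2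
          exact ⟨hb, fun x hx => Finset.card_le_one.1 hk1 x hx b hb⟩
        have hcnt : cnt w b = n := by
          have h' : ∑ b' ∈ supp, cnt w b' = cnt w b := by
            rw [hsingle, Finset.sum_singleton]
          omega
        have hone : empP w b = 1 := by
          rw [empP_eq, hcnt]
          field_simp
        rw [hone, Real.log_one, mul_zero]
      · rw [if_neg h]
    rw [hE, mul_zero, Real.exp_zero]
    nlinarith
  · push_neg at hk1
    have hk : 2 ≤ supp.card := hk1
    have hm1 : ∀ b ∈ supp, 1 ≤ cnt w b := by
      intro b hb
      rw [hsuppdef] at hb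
      exact (Finset.mem_filter.1 hb).2
    have hL := Lbound supp (cnt w) hm1 hsum hk hn
    set L := ∏ b ∈ supp, (Real.exp 1 * Real.sqrt (cnt w b)) with hLdef
    set F := ∏ b ∈ supp, ((cnt w b).factorial : ℝ) with hFdef
    have hFpos : 0 < F := Finset.prod_pos fun b _ => by
      exact_mod_cast (cnt w b).factorial_pos
    have hchain : Real.exp ((n : ℝ) * empEnt w) * F
        ≤ L * (((typeCls w).card : ℝ) * F) := by
      calc Real.exp ((n : ℝ) * empEnt w) * F
          = ∏ b ∈ supp, (((n : ℝ) / (cnt w b)) ^ (cnt w b) * ((cnt w b).factorial : ℝ)) := by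
            rw [exp_n_empEnt_eq hn w, hFdef, ← Finset.prod_mul_distrib]
        _ ≤ ∏ b ∈ supp, (Real.exp 1 * Real.sqrt (cnt w b) * ((n : ℝ) / Real.exp 1) ^ (cnt w b)) := by
            apply Finset.prod_le_prod
            · intro b hb
              have : (0:ℝ) < cnt w b := by exact_mod_cast hm1 b hb
              positivity
            · intro b hb
              have hcpos : (0:ℝ) < cnt w b := by exact_mod_cast hm1 b hb
              have hfac := factorial_le_stirling (cnt w b) (hm1 b hb)
              calc ((n : ℝ) / (cnt w b)) ^ (cnt w b) * ((cnt w b).factorial : ℝ)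
                  ≤ ((n : ℝ) / (cnt w b)) ^ (cnt w b)
                    * (Real.exp 1 * Real.sqrt (cnt w b) * ((cnt w b : ℝ) / Real.exp 1) ^ (cnt w b)) := by
                    apply mul_le_mul_of_nonneg_left hfac (by positivity)
                _ = Real.exp 1 * Real.sqrt (cnt w b)
                    * (((n : ℝ) / (cnt w b)) * ((cnt w b : ℝ) / Real.exp 1)) ^ (cnt w b) := by
                    rw [mul_pow]; ring
                _ = Real.exp 1 * Real.sqrt (cnt w b) * ((n : ℝ) / Real.exp 1) ^ (cnt w b) := by
                    have hbase : ((n : ℝ) / (cnt w b)) * ((cnt w b : ℝ) / Real.exp 1)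
                        = (n : ℝ) / Real.exp 1 := by
                      field_simp
                    rw [hbase]
        _ = L * ∏ b ∈ supp, ((n : ℝ) / Real.exp 1) ^ (cnt w b) := by
            rw [hLdef, ← Finset.prod_mul_distrib]
        _ = L * ((n : ℝ) / Real.exp 1) ^ n := by
            rw [Finset.prod_pow_eq_pow_sum, hsum]
        _ ≤ L * (n.factorial : ℝ) := by
            apply mul_le_mul_of_nonneg_left _ (Finset.prod_nonneg fun b _ => by positivity)
            have h1 := pow_le_exp_mul_factorial n
            have h2 : (0:ℝ) < Real.exp 1 ^ n := by positivity
            rw [div_pow, div_le_iff₀ h2]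
            have hexp1 : Real.exp 1 ^ n = Real.exp n := by
              rw [← Real.exp_nat_mul, mul_one]
            rw [hexp1]
            exact h1.trans (le_of_eq (mul_comm _ _))
        _ ≤ L * (((typeCls w).card : ℝ) * F) := by
            apply mul_le_mul_of_nonneg_left _ (Finset.prod_nonneg fun b _ => by positivity)
            have h := factorial_le_typeCls w
            have hcast : (n.factorial : ℝ) ≤ ((typeCls w).card : ℝ) * ∏ b, ((cnt w b).factorial : ℝ) := by
              exact_mod_cast h
            rw [hFdef]
            calc (n.factorial : ℝ) ≤ ((typeCls w).card : ℝ) * ∏ b, ((cnt w b).factorial : ℝ) := hcast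
              _ = ((typeCls w).card : ℝ) * ∏ b ∈ supp, ((cnt w b).factorial : ℝ) := by
                  congr 1
                  rw [← Nat.cast_prod, ← Nat.cast_prod, prod_supp_factorial]
    have h2 : Real.exp ((n : ℝ) * empEnt w) ≤ L * ((typeCls w).card : ℝ) := by
      have := (mul_le_mul_iff_of_pos_right hFpos).1 (by linarith [hchain] : Real.exp ((n : ℝ) * empEnt w) * F ≤ (L * ((typeCls w).card : ℝ)) * F)
      exact this
    calc Real.exp ((n : ℝ) * empEnt w) ≤ L * ((typeCls w).card : ℝ) := h2
      _ ≤ ((n : ℝ) + 1) ^ (Fintype.card B ^ 2 - Fintype.card B) * ((typeCls w).card : ℝ) := by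
          apply mul_le_mul_of_nonneg_right hL (by positivity)
      _ = ((typeCls w).card : ℝ) * ((n : ℝ) + 1) ^ (Fintype.card B ^ 2 - Fintype.card B) := by ring

end QstarAux



namespace QstarAux

variable {B : Type} [Fintype B] [DecidableEq B] {n : ℕ}

/-- joint counts. -/
def mat (x y : Fin n → B) (a b : B) : ℕ := (univ.filter fun i => x i = a ∧ y i = b).card

lemma mem_condTypeClass {x y y' : Fin n → B} :
    y' ∈ condTypeClass x y ↔ ∀ a b, mat x y' a b = mat x y a b := by
  simp [condTypeClass, mat]

lemma self_mem_condTypeClass (x y : Fin n → B) : y ∈ condTypeClass x y :=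
  mem_condTypeClass.2 fun _ _ => rfl

lemma condTypeClass_card_pos (x y : Fin n → B) : 0 < (condTypeClass x y).card :=
  Finset.card_pos.2 ⟨y, self_mem_condTypeClass x y⟩

lemma mat_le (x y : Fin n → B) (a b : B) : mat x y a b ≤ n := by
  simpa [mat] using Finset.card_filter_le (univ : Finset (Fin n)) (fun i => x i = a ∧ y i = b)

lemma mat_comp_perm (σ : Equiv.Perm (Fin n)) (x y : Fin n → B) (a b : B) :
    mat (x ∘ σ) (y ∘ σ) a b = mat x y a b :=
  card_filter_comp σ (fun i => x i = a ∧ y i = b)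

lemma comp_perm_inv_comp (σ : Equiv.Perm (Fin n)) (y : Fin n → B) :
    (y ∘ ⇑σ⁻¹) ∘ ⇑σ = y := by
  funext i; simp

lemma mat_comp_left (σ : Equiv.Perm (Fin n)) (x y : Fin n → B) (a b : B) :
    mat (x ∘ σ) y a b = mat x (y ∘ ⇑σ⁻¹) a b := by
  conv_lhs => rw [← comp_perm_inv_comp σ y]
  exact mat_comp_perm σ x (y ∘ ⇑σ⁻¹) a b

lemma dSeq_comp_perm (d : B → B → ℝ) (σ : Equiv.Perm (Fin n)) (u v : Fin n → B) :
    dSeq d (u ∘ σ) (v ∘ σ) = dSeq d u v :=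
  Equiv.sum_comp σ (fun i => d (u i) (v i))

lemma dSeq_comp_left (d : B → B → ℝ) (σ : Equiv.Perm (Fin n)) (x y : Fin n → B) :
    dSeq d (x ∘ σ) y = dSeq d x (y ∘ ⇑σ⁻¹) := by
  conv_lhs => rw [← comp_perm_inv_comp σ y]
  exact dSeq_comp_perm d σ x (y ∘ ⇑σ⁻¹)

lemma cnt_eq_sum_mat (x y : Fin n → B) (a : B) : cnt x a = ∑ b, mat x y a b := by
  unfold cnt mat
  rw [Finset.card_eq_sum_card_fiberwise
    (f := y) (t := univ) (fun i _ => Finset.mem_univ (y i))]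
  refine Finset.sum_congr rfl fun b _ => ?_
  congr 1
  rw [Finset.filter_filter]

lemma mat_fst_snd (w : Fin n → B × B) (a b : B) :
    mat (fun i => (w i).1) (fun i => (w i).2) a b = cnt w (a, b) := by
  unfold mat cnt
  congr 1
  apply Finset.filter_congr
  intro i _
  constructor
  · rintro ⟨h1, h2⟩; exact Prod.ext h1 h2
  · intro h; simp [h]

lemma cnt_pair (x y : Fin n → B) (a b : B) :
    cnt (fun i => (x i, y i)) (a, b) = mat x y a b :=
  (mat_fst_snd (fun i => (x i, y i)) a b).symm

lemma dSeq_eq_sum_mat (d : B → B → ℝ) (x y : Fin n → B) :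
    dSeq d x y = ∑ p : B × B, (mat x y p.1 p.2 : ℝ) * d p.1 p.2 := by
  have h := sum_fiberwise_f (fun i => (x i, y i)) (fun p => d p.1 p.2)
  unfold dSeq
  rw [h]
  refine Finset.sum_congr rfl fun p _ => ?_
  rw [show p = (p.1, p.2) from rfl, cnt_pair]

/-- decomposition `|T_{(x,y)}| = |T_x| · |T(y|x)|`. -/
lemma pair_decomp (x y : Fin n → B) :
    (typeCls (fun i => (x i, y i))).card
      = (typeCls x).card * (condTypeClass x y).card := by
  classical
  have hmap : ∀ z' ∈ typeCls (fun i => (x i, y i)),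
      (fun i => (z' i).1) ∈ typeCls x := by
    intro z' hz'
    rw [mem_typeCls]
    intro a
    rw [cnt_eq_sum_mat (fun i => (z' i).1) (fun i => (z' i).2) a,
      cnt_eq_sum_mat x y a]
    refine Finset.sum_congr rfl fun b _ => ?_
    rw [mat_fst_snd, mem_typeCls.1 hz' (a, b), cnt_pair]
  rw [Finset.card_eq_sum_card_fiberwise hmap]
  have hfib : ∀ x' ∈ typeCls x,
      ((typeCls (fun i => (x i, y i))).filter fun z' => (fun i => (z' i).1) = x').card
        = (condTypeClass x y).card := by
    intro x' hx'
    obtain ⟨σ, rfl⟩ := exists_perm (mem_typeCls.1 hx')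
    apply Finset.card_nbij' (fun z' => (fun j => (z' (σ⁻¹ j)).2))
      (fun y'' => (fun i => (x (σ i), y'' (σ i))))
    · intro z' hz'
      simp only [Finset.mem_coe, Finset.mem_filter] at hz'
      obtain ⟨hz1, hz2⟩ := hz'
      rw [Finset.mem_coe, mem_condTypeClass]
      intro a b
      have key : mat ((x ∘ ⇑σ) ∘ ⇑σ⁻¹) ((fun i => (z' i).2) ∘ ⇑σ⁻¹) a b
          = mat (x ∘ ⇑σ) (fun i => (z' i).2) a b := mat_comp_perm σ⁻¹ _ _ a b
      have hx'eq : (x ∘ ⇑σ) ∘ ⇑σ⁻¹ = x := by funext i; simp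
      have h2 : mat (x ∘ ⇑σ) (fun i => (z' i).2) a b = mat x y a b := by
        have e1 : mat (fun i => (z' i).1) (fun i => (z' i).2) a b = cnt z' (a, b) :=
          mat_fst_snd z' a b
        have e2 : cnt z' (a, b) = cnt (fun i => (x i, y i)) (a, b) :=
          mem_typeCls.1 hz1 (a, b)
        have e3 : cnt (fun i => (x i, y i)) (a, b) = mat x y a b := cnt_pair x y a b
        rw [← hz2]
        rw [e1, e2, e3]
      calc mat x (fun j => (z' (σ⁻¹ j)).2) a b
          = mat ((x ∘ ⇑σ) ∘ ⇑σ⁻¹) ((fun i => (z' i).2) ∘ ⇑σ⁻¹) a b := by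
            rw [hx'eq]; rfl
        _ = mat (x ∘ ⇑σ) (fun i => (z' i).2) a b := key
        _ = mat x y a b := h2
    · intro y'' hy''
      simp only [Finset.mem_coe, Finset.mem_filter, Finset.mem_univ, true_and]
      constructor
      · rw [mem_typeCls]
        rintro ⟨a, b⟩
        rw [show (fun i => ((x (σ i)), y'' (σ i))) = (fun i => (x i, y'' i)) ∘ ⇑σ from rfl]
        rw [show cnt ((fun i => (x i, y'' i)) ∘ ⇑σ) (a, b)
            = cnt (fun i => (x i, y'' i)) (a, b) from cnt_comp_perm σ _ _]
        rw [cnt_pair, cnt_pair]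
        exact mem_condTypeClass.1 hy'' a b
      · rfl
    · intro z' hz'
      simp only [Finset.mem_coe, Finset.mem_filter] at hz'
      funext i
      have h3 : x (σ i) = (z' i).1 := (congrFun hz'.2 i).symm
      beta_reduce
      rw [h3]
      simp
    · intro y'' _
      funext j
      simp
  rw [Finset.sum_congr rfl hfib, Finset.sum_const, smul_eq_mul]

lemma cnt_swap (w : Fin n → B × B) (p : B × B) :
    cnt (fun i => ((w i).2, (w i).1)) p = cnt w (p.2, p.1) := by
  unfold cnt
  congr 1
  apply Finset.filter_congr
  intro i _
  constructor
  · intro h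
    have h1 := congrArg Prod.fst h
    have h2 := congrArg Prod.snd h
    simp only at h1 h2
    exact Prod.ext h2 h1
  · intro h
    simp [h]

lemma typeCls_swap_card (w : Fin n → B × B) :
    (typeCls (fun i => ((w i).2, (w i).1))).card = (typeCls w).card := by
  apply Finset.card_nbij' (fun u => fun i => ((u i).2, (u i).1))
    (fun u => fun i => ((u i).2, (u i).1))
  · intro u hu
    rw [Finset.mem_coe, mem_typeCls]
    rintro ⟨a, b⟩
    have h := mem_typeCls.1 hu (b, a)
    rw [cnt_swap] at h
    rw [show cnt (fun i => ((u i).2, (u i).1)) (a, b)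
        = cnt u (b, a) from cnt_swap u (a, b)]
    simpa using h
  · intro u hu
    rw [Finset.mem_coe, mem_typeCls]
    rintro ⟨a, b⟩
    have h := mem_typeCls.1 hu (b, a)
    rw [show cnt (fun i => ((u i).2, (u i).1)) (a, b)
        = cnt u (b, a) from cnt_swap u (a, b)]
    rw [h, cnt_swap]
  · intro u _; funext i; simp
  · intro u _; funext i; simp

/-- the cross identity `|T_y|·|T(x|y)| = |T_x|·|T(y|x)|`. -/
lemma cross_identity (x y : Fin n → B) :
    (typeCls y).card * (condTypeClass y x).card
      = (typeCls x).card * (condTypeClass x y).card := by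
  rw [← pair_decomp y x, ← pair_decomp x y]
  exact typeCls_swap_card (fun i => (x i, y i))

lemma condTypeClass_card_eq_of_mat {x x' y y' : Fin n → B}
    (hx : ∀ a, cnt x' a = cnt x a) (hmat : ∀ a b, mat x' y' a b = mat x y a b) :
    (condTypeClass x' y').card = (condTypeClass x y).card := by
  obtain ⟨σ, rfl⟩ := exists_perm hx
  apply Finset.card_nbij' (fun u => u ∘ ⇑σ⁻¹) (fun v => v ∘ ⇑σ)
  · intro u hu
    rw [Finset.mem_coe, mem_condTypeClass]
    intro a b
    have h1 : mat x (u ∘ ⇑σ⁻¹) a b = mat (x ∘ ⇑σ) u a b := (mat_comp_left σ x u a b).symm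
    rw [h1, mem_condTypeClass.1 hu a b, hmat]
  · intro v hv
    rw [Finset.mem_coe, mem_condTypeClass]
    intro a b
    rw [mat_comp_perm σ x v a b, mem_condTypeClass.1 hv a b, ← hmat]
  · intro u _; funext i; simp
  · intro v _; funext i; simp

end QstarAux



namespace QstarAux

variable {B : Type} [Fintype B] [DecidableEq B] {n : ℕ}

lemma mat_transpose (x y : Fin n → B) (a b : B) : mat y x a b = mat x y b a := by
  unfold mat
  congr 1
  apply Finset.filter_congr
  intro i _
  exact ⟨fun h => ⟨h.2, h.1⟩, fun h => ⟨h.2, h.1⟩⟩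

lemma numCondTypes_eq_matSet (dn : (Fin n → B) → (Fin n → B) → ℝ) (Δ : ℝ) (x : Fin n → B) :
    numCondTypes dn Δ x
      = ((univ.filter fun y => dn x y ≤ (n : ℝ) * Δ).image
          fun y => (fun a b => mat x y a b)).card := by
  classical
  unfold numCondTypes
  have h1 : (univ.filter fun y => dn x y ≤ (n : ℝ) * Δ).image (fun y => condTypeClass x y)
      = ((univ.filter fun y => dn x y ≤ (n : ℝ) * Δ).image
          fun y => (fun a b => mat x y a b)).image
          (fun M => univ.filter fun y' => ∀ a b, mat x y' a b = M a b) := by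
    rw [Finset.image_image]
    apply Finset.image_congr
    intro y _
    ext y'
    simp only [Function.comp_apply, Finset.mem_filter, Finset.mem_univ, true_and,
      mem_condTypeClass]
  rw [h1]
  apply Finset.card_image_of_injOn
  intro M1 hM1 M2 hM2 heq
  simp only [Finset.coe_image, Set.mem_image, Finset.mem_coe, Finset.mem_filter] at hM1 hM2
  obtain ⟨y1, _, hy1⟩ := hM1
  have hy1mem : y1 ∈ univ.filter fun y' => ∀ a b, mat x y' a b = M1 a b := by
    simp only [Finset.mem_filter, Finset.mem_univ, true_and]
    intro a b
    exact congrFun (congrFun hy1 a) b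
  have heq' : (univ.filter fun y' => ∀ a b, mat x y' a b = M1 a b)
      = (univ.filter fun y' => ∀ a b, mat x y' a b = M2 a b) := heq
  rw [heq'] at hy1mem
  simp only [Finset.mem_filter, Finset.mem_univ, true_and] at hy1mem
  funext a b
  rw [← congrFun (congrFun hy1 a) b, hy1mem a b]

lemma numCondTypes_comp_perm (d : B → B → ℝ) (Δ : ℝ) (σ : Equiv.Perm (Fin n))
    (x : Fin n → B) :
    numCondTypes (dSeq d) Δ (x ∘ ⇑σ) = numCondTypes (dSeq d) Δ x := by
  rw [numCondTypes_eq_matSet, numCondTypes_eq_matSet]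
  apply congrArg Finset.card
  ext M
  simp only [Finset.mem_image, Finset.mem_filter, Finset.mem_univ, true_and]
  constructor
  · rintro ⟨y', hd, rfl⟩
    refine ⟨y' ∘ ⇑σ⁻¹, ?_, ?_⟩
    · rw [← dSeq_comp_left]; exact hd
    · funext a b; rw [← mat_comp_left]
  · rintro ⟨y'', hd, rfl⟩
    refine ⟨y'' ∘ ⇑σ, ?_, ?_⟩
    · rw [show dSeq d (x ∘ ⇑σ) (y'' ∘ ⇑σ) = dSeq d x y'' from dSeq_comp_perm d σ x y'']
      exact hd
    · funext a b; rw [mat_comp_perm]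

lemma numCondTypes_invariant (d : B → B → ℝ) (Δ : ℝ) {x x' : Fin n → B}
    (h : ∀ a, cnt x' a = cnt x a) :
    numCondTypes (dSeq d) Δ x' = numCondTypes (dSeq d) Δ x := by
  obtain ⟨σ, rfl⟩ := exists_perm h
  exact numCondTypes_comp_perm d Δ σ x

lemma numCondTypes_pos (d : B → B → ℝ) (hd0 : ∀ a, d a a = 0) (Δ : ℝ) (hΔ : 0 ≤ Δ)
    (x : Fin n → B) : 0 < numCondTypes (dSeq d) Δ x := by
  apply Finset.card_pos.2
  refine ⟨condTypeClass x x, Finset.mem_image_of_mem _ ?_⟩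
  simp only [Finset.mem_filter, Finset.mem_univ, true_and]
  have h0 : dSeq d x x = 0 := by simp [dSeq, hd0]
  rw [h0]
  positivity

lemma numCondTypes_le (dn : (Fin n → B) → (Fin n → B) → ℝ) (Δ : ℝ) (x : Fin n → B) :
    numCondTypes dn Δ x ≤ (n + 1) ^ (Fintype.card B ^ 2) := by
  classical
  rw [numCondTypes_eq_matSet]
  have hinj : Set.InjOn (fun M : B → B → ℕ => (fun a b => (⟨min (M a b) n,
      Nat.lt_succ_of_le (min_le_right _ _)⟩ : Fin (n + 1))))
      ((univ.filter fun y => dn x y ≤ (n : ℝ) * Δ).image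
        fun y => (fun a b => mat x y a b)) := by
    intro M1 hM1 M2 hM2 heq
    simp only [Finset.coe_image, Set.mem_image, Finset.mem_coe, Finset.mem_filter] at hM1 hM2
    obtain ⟨y1, _, hy1⟩ := hM1
    obtain ⟨y2, _, hy2⟩ := hM2
    funext a b
    have h1 : M1 a b ≤ n := by rw [← congrFun (congrFun hy1 a) b]; exact mat_le x y1 a b
    have h2 : M2 a b ≤ n := by rw [← congrFun (congrFun hy2 a) b]; exact mat_le x y2 a b
    have := congrFun (congrFun heq a) b
    simp only [Fin.mk.injEq] at this
    omega
  have hle := Finset.card_le_card_of_injOn _ (fun M _ => Finset.mem_univ _) hinj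
  refine hle.trans ?_
  rw [Finset.card_univ, Fintype.card_fun, Fintype.card_fun, Fintype.card_fin, ← pow_mul,
    ← sq]

end QstarAux



namespace QstarAux

variable {B : Type} [Fintype B] [DecidableEq B] {n : ℕ}

lemma cnt_eq_of_mat_eq {x x₀ y : Fin n → B} (h : ∀ a b, mat x y a b = mat x₀ y a b) :
    ∀ a, cnt x a = cnt x₀ a := fun a => by
  rw [cnt_eq_sum_mat x y a, cnt_eq_sum_mat x₀ y a]
  exact Finset.sum_congr rfl fun b _ => h a b

lemma dSeq_eq_of_mat_eq (d : B → B → ℝ) {x x₀ y : Fin n → B}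
    (h : ∀ a b, mat x y a b = mat x₀ y a b) : dSeq d x y = dSeq d x₀ y := by
  rw [dSeq_eq_sum_mat, dSeq_eq_sum_mat]
  exact Finset.sum_congr rfl fun p _ => by rw [h p.1 p.2]

lemma fiber_eq_ctc (d : B → B → ℝ) (Δ : ℝ) (y x₀ : Fin n → B)
    (hx₀ : dSeq d x₀ y ≤ (n : ℝ) * Δ) :
    ((univ.filter fun x => dSeq d x y ≤ (n : ℝ) * Δ).filter
        fun x => (fun a b => mat x y a b) = (fun a b => mat x₀ y a b))
      = condTypeClass y x₀ := by
  ext x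
  simp only [Finset.mem_filter, Finset.mem_univ, true_and, mem_condTypeClass]
  constructor
  · rintro ⟨_, hmat⟩
    intro a b
    rw [mat_transpose x y a b, mat_transpose x₀ y a b]
    exact congrFun (congrFun hmat b) a
  · intro h
    have hmat : ∀ a b, mat x y a b = mat x₀ y a b := by
      intro a b
      have e1 : mat y x b a = mat x y a b := mat_transpose x y b a
      have e2 : mat y x₀ b a = mat x₀ y a b := mat_transpose x₀ y b a
      rw [← e1, ← e2]
      exact h b a
    refine ⟨?_, ?_⟩
    · rw [dSeq_eq_of_mat_eq d hmat]; exact hx₀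
    · funext a b; exact hmat a b

lemma g_constant (d : B → B → ℝ) (Δ : ℝ) (P : B → ℝ) (y x x₀ : Fin n → B)
    (h : ∀ a b, mat x y a b = mat x₀ y a b) :
    seqProb P x * Astar (dSeq d) Δ x y = seqProb P x₀ * Astar (dSeq d) Δ x₀ y := by
  have hcnt := cnt_eq_of_mat_eq h
  have hseq : seqProb P x = seqProb P x₀ := by
    rw [seqProb_eq_prod, seqProb_eq_prod]
    exact Finset.prod_congr rfl fun a _ => by rw [hcnt a]
  have hD : dSeq d x y = dSeq d x₀ y := dSeq_eq_of_mat_eq d h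
  have hN : numCondTypes (dSeq d) Δ x = numCondTypes (dSeq d) Δ x₀ :=
    numCondTypes_invariant d Δ hcnt
  have hC : (condTypeClass x y).card = (condTypeClass x₀ y).card :=
    condTypeClass_card_eq_of_mat hcnt h
  unfold Astar
  rw [hseq, hD, hN, hC]

lemma astar_nonneg (d : B → B → ℝ) (Δ : ℝ) (x y : Fin n → B) :
    0 ≤ Astar (dSeq d) Δ x y := by
  unfold Astar
  by_cases h : dSeq d x y ≤ (n : ℝ) * Δ
  · rw [if_pos h]; positivity
  · rw [if_neg h]

end QstarAux



namespace QstarAux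

variable {B : Type} [Fintype B] [DecidableEq B] {n : ℕ}

lemma value_upper (hn : 1 ≤ n) (d : B → B → ℝ) (Δ : ℝ) (P : B → ℝ)
    (hPpos : ∀ a, 0 < P a) (y x₀ : Fin n → B) (hx₀d : dSeq d x₀ y ≤ (n : ℝ) * Δ)
    (DT : ℝ) (hKL : DT ≤ klDiv (empP x₀) P) :
    ((condTypeClass y x₀).card : ℝ) * (seqProb P x₀ * Astar (dSeq d) Δ x₀ y)
      ≤ ((n : ℝ) + 1) ^ (Fintype.card B ^ 2 - Fintype.card B)
        * Real.exp (-(n : ℝ) * (empEnt y + DT))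
        * ((numCondTypes (dSeq d) Δ x₀ : ℝ))⁻¹ := by
  have hnR : (0 : ℝ) < n := by exact_mod_cast hn
  have hty : (0 : ℝ) < ((typeCls y).card : ℝ) := by exact_mod_cast typeCls_card_pos y
  have hc2 : (0 : ℝ) < ((condTypeClass x₀ y).card : ℝ) := by
    exact_mod_cast condTypeClass_card_pos x₀ y
  have hcross : ((typeCls y).card : ℝ) * ((condTypeClass y x₀).card : ℝ)
      = ((typeCls x₀).card : ℝ) * ((condTypeClass x₀ y).card : ℝ) := by
    exact_mod_cast cross_identity x₀ y
  have hNinv : (0 : ℝ) ≤ ((numCondTypes (dSeq d) Δ x₀ : ℝ))⁻¹ := by positivity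
  have hp : seqProb P x₀ = Real.exp (-(n : ℝ) * (empEnt x₀ + klDiv (empP x₀) P)) :=
    seqProb_eq_exp hn P hPpos x₀
  have hpnn : 0 ≤ seqProb P x₀ := seqProb_nonneg P (fun a => (hPpos a).le) x₀
  have htx : ((typeCls x₀).card : ℝ) ≤ Real.exp ((n : ℝ) * empEnt x₀) :=
    typeCls_card_le_exp hn x₀
  have htyge := typeCls_card_ge hn y
  unfold Astar
  rw [if_pos hx₀d]
  have key : ((condTypeClass y x₀).card : ℝ) * seqProb P x₀
        / ((condTypeClass x₀ y).card : ℝ)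
      ≤ ((n : ℝ) + 1) ^ (Fintype.card B ^ 2 - Fintype.card B)
        * Real.exp (-(n : ℝ) * (empEnt y + DT)) := by
    rw [div_le_iff₀ hc2]
    apply le_of_mul_le_mul_left _ hty
    have hexp1 : Real.exp (-(n : ℝ) * DT)
        = Real.exp ((n : ℝ) * empEnt y) * Real.exp (-(n : ℝ) * (empEnt y + DT)) := by
      rw [← Real.exp_add]; congr 1; ring
    calc ((typeCls y).card : ℝ) * (((condTypeClass y x₀).card : ℝ) * seqProb P x₀)
        = (((typeCls y).card : ℝ) * ((condTypeClass y x₀).card : ℝ)) * seqProb P x₀ := by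
          ring
      _ = (((typeCls x₀).card : ℝ) * seqProb P x₀) * ((condTypeClass x₀ y).card : ℝ) := by
          rw [hcross]; ring
      _ ≤ (Real.exp ((n : ℝ) * empEnt x₀) * seqProb P x₀)
            * ((condTypeClass x₀ y).card : ℝ) := by
          apply mul_le_mul_of_nonneg_right (mul_le_mul_of_nonneg_right htx hpnn) hc2.le
      _ ≤ Real.exp (-(n : ℝ) * DT) * ((condTypeClass x₀ y).card : ℝ) := by
          apply mul_le_mul_of_nonneg_right _ hc2.le
          rw [hp, ← Real.exp_add]
          apply Real.exp_le_exp.2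
          have h5 : (n : ℝ) * DT ≤ (n : ℝ) * klDiv (empP x₀) P :=
            mul_le_mul_of_nonneg_left hKL hnR.le
          nlinarith
      _ = (Real.exp ((n : ℝ) * empEnt y) * Real.exp (-(n : ℝ) * (empEnt y + DT)))
            * ((condTypeClass x₀ y).card : ℝ) := by rw [hexp1]
      _ ≤ ((((typeCls y).card : ℝ)
              * ((n : ℝ) + 1) ^ (Fintype.card B ^ 2 - Fintype.card B))
            * Real.exp (-(n : ℝ) * (empEnt y + DT)))
            * ((condTypeClass x₀ y).card : ℝ) := by
          apply mul_le_mul_of_nonneg_right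
            (mul_le_mul_of_nonneg_right htyge (Real.exp_pos _).le) hc2.le
      _ = ((typeCls y).card : ℝ)
            * (((n : ℝ) + 1) ^ (Fintype.card B ^ 2 - Fintype.card B)
              * Real.exp (-(n : ℝ) * (empEnt y + DT))
              * ((condTypeClass x₀ y).card : ℝ)) := by ring
  calc ((condTypeClass y x₀).card : ℝ)
        * (seqProb P x₀ * (((numCondTypes (dSeq d) Δ x₀ : ℝ))⁻¹
            / ((condTypeClass x₀ y).card : ℝ)))
      = (((condTypeClass y x₀).card : ℝ) * seqProb P x₀
          / ((condTypeClass x₀ y).card : ℝ))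
          * ((numCondTypes (dSeq d) Δ x₀ : ℝ))⁻¹ := by ring
    _ ≤ (((n : ℝ) + 1) ^ (Fintype.card B ^ 2 - Fintype.card B)
          * Real.exp (-(n : ℝ) * (empEnt y + DT)))
          * ((numCondTypes (dSeq d) Δ x₀ : ℝ))⁻¹ :=
        mul_le_mul_of_nonneg_right key hNinv
    _ = ((n : ℝ) + 1) ^ (Fintype.card B ^ 2 - Fintype.card B)
          * Real.exp (-(n : ℝ) * (empEnt y + DT))
          * ((numCondTypes (dSeq d) Δ x₀ : ℝ))⁻¹ := by ring

lemma value_lower (hn : 1 ≤ n) (d : B → B → ℝ) (hd0 : ∀ a, d a a = 0) (Δ : ℝ)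
    (hΔ : 0 ≤ Δ) (P : B → ℝ) (hPpos : ∀ a, 0 < P a) (y x₀ : Fin n → B)
    (hx₀d : dSeq d x₀ y ≤ (n : ℝ) * Δ) (DT : ℝ) (hKL : klDiv (empP x₀) P = DT) :
    Real.exp (-(n : ℝ) * (empEnt y + DT)) / ((n : ℝ) + 1) ^ (2 * Fintype.card B ^ 2)
      ≤ ((condTypeClass y x₀).card : ℝ) * (seqProb P x₀ * Astar (dSeq d) Δ x₀ y) := by
  have hnR : (0 : ℝ) < n := by exact_mod_cast hn
  set cB := Fintype.card B with hcB
  set E := cB ^ 2 - cB with hE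
  have hn1 : (1 : ℝ) ≤ (n : ℝ) + 1 := by linarith
  have hPW : ∀ k : ℕ, (0 : ℝ) < ((n : ℝ) + 1) ^ k := fun k => by positivity
  have hty : (0 : ℝ) < ((typeCls y).card : ℝ) := by exact_mod_cast typeCls_card_pos y
  have hc2 : (0 : ℝ) < ((condTypeClass x₀ y).card : ℝ) := by
    exact_mod_cast condTypeClass_card_pos x₀ y
  have hcross : ((typeCls y).card : ℝ) * ((condTypeClass y x₀).card : ℝ)
      = ((typeCls x₀).card : ℝ) * ((condTypeClass x₀ y).card : ℝ) := by
    exact_mod_cast cross_identity x₀ y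
  have hp : seqProb P x₀ = Real.exp (-(n : ℝ) * (empEnt x₀ + DT)) := by
    rw [seqProb_eq_exp hn P hPpos x₀, hKL]
  have hNpos : (0 : ℝ) < (numCondTypes (dSeq d) Δ x₀ : ℝ) := by
    exact_mod_cast numCondTypes_pos d hd0 Δ hΔ x₀
  have hNle : (numCondTypes (dSeq d) Δ x₀ : ℝ) ≤ ((n : ℝ) + 1) ^ (cB ^ 2) := by
    have h := numCondTypes_le (dSeq d) Δ x₀
    calc (numCondTypes (dSeq d) Δ x₀ : ℝ) ≤ (((n + 1) ^ cB ^ 2 : ℕ) : ℝ) := by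
          exact_mod_cast h
      _ = ((n : ℝ) + 1) ^ (cB ^ 2) := by push_cast; ring
  have hNinv : (((n : ℝ) + 1) ^ (cB ^ 2))⁻¹ ≤ ((numCondTypes (dSeq d) Δ x₀ : ℝ))⁻¹ :=
    inv_anti₀ hNpos hNle
  have htxge := typeCls_card_ge hn x₀
  have htyle : ((typeCls y).card : ℝ) ≤ Real.exp ((n : ℝ) * empEnt y) :=
    typeCls_card_le_exp hn y
  unfold Astar
  rw [if_pos hx₀d]
  have hdivEq : ((condTypeClass y x₀).card : ℝ) * seqProb P x₀
        / ((condTypeClass x₀ y).card : ℝ)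
      = ((typeCls x₀).card : ℝ) * seqProb P x₀ / ((typeCls y).card : ℝ) := by
    rw [div_eq_div_iff hc2.ne' hty.ne']
    linear_combination seqProb P x₀ * hcross
  have hpnn : 0 ≤ seqProb P x₀ := seqProb_nonneg P (fun a => (hPpos a).le) x₀
  have step1 : Real.exp (-(n : ℝ) * (empEnt y + DT)) / ((n : ℝ) + 1) ^ E
      ≤ ((typeCls x₀).card : ℝ) * seqProb P x₀ / ((typeCls y).card : ℝ) := by
    rw [div_le_div_iff₀ (hPW E) hty]
    have hgoal : Real.exp (-(n : ℝ) * (empEnt y + DT)) * ((typeCls y).card : ℝ)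
        ≤ Real.exp (-(n : ℝ) * (empEnt y + DT)) * Real.exp ((n : ℝ) * empEnt y) := by
      exact mul_le_mul_of_nonneg_left htyle (Real.exp_pos _).le
    have hid : Real.exp (-(n : ℝ) * (empEnt y + DT)) * Real.exp ((n : ℝ) * empEnt y)
        = Real.exp (-(n : ℝ) * DT) := by
      rw [← Real.exp_add]; congr 1; ring
    have hid2 : Real.exp (-(n : ℝ) * DT)
        = Real.exp (-(n : ℝ) * (empEnt x₀ + DT)) * Real.exp ((n : ℝ) * empEnt x₀) := by
      rw [← Real.exp_add]; congr 1; ring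
    have hstep : Real.exp ((n : ℝ) * empEnt x₀)
        ≤ ((typeCls x₀).card : ℝ) * ((n : ℝ) + 1) ^ E := htxge
    calc Real.exp (-(n : ℝ) * (empEnt y + DT)) * ((typeCls y).card : ℝ)
        ≤ Real.exp (-(n : ℝ) * DT) := by rw [← hid]; exact hgoal
      _ = Real.exp (-(n : ℝ) * (empEnt x₀ + DT)) * Real.exp ((n : ℝ) * empEnt x₀) := hid2
      _ ≤ Real.exp (-(n : ℝ) * (empEnt x₀ + DT))
            * (((typeCls x₀).card : ℝ) * ((n : ℝ) + 1) ^ E) :=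
          mul_le_mul_of_nonneg_left hstep (Real.exp_pos _).le
      _ = ((typeCls x₀).card : ℝ) * Real.exp (-(n : ℝ) * (empEnt x₀ + DT))
            * ((n : ℝ) + 1) ^ E := by ring
      _ = ((typeCls x₀).card : ℝ) * seqProb P x₀ * ((n : ℝ) + 1) ^ E := by rw [← hp]
  have hEle : E + cB ^ 2 ≤ 2 * cB ^ 2 := by
    have h1 : cB ≤ cB ^ 2 := Nat.le_self_pow two_ne_zero cB
    omega
  have hfinal : Real.exp (-(n : ℝ) * (empEnt y + DT)) / ((n : ℝ) + 1) ^ (2 * cB ^ 2)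
      ≤ (Real.exp (-(n : ℝ) * (empEnt y + DT)) / ((n : ℝ) + 1) ^ E)
        * (((n : ℝ) + 1) ^ (cB ^ 2))⁻¹ := by
    have hpowle : ((n : ℝ) + 1) ^ (E + cB ^ 2) ≤ ((n : ℝ) + 1) ^ (2 * cB ^ 2) :=
      pow_le_pow_right₀ hn1 hEle
    calc Real.exp (-(n : ℝ) * (empEnt y + DT)) / ((n : ℝ) + 1) ^ (2 * cB ^ 2)
        ≤ Real.exp (-(n : ℝ) * (empEnt y + DT)) / ((n : ℝ) + 1) ^ (E + cB ^ 2) :=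
          div_le_div_of_nonneg_left (Real.exp_pos _).le (hPW _) hpowle
      _ = (Real.exp (-(n : ℝ) * (empEnt y + DT)) / ((n : ℝ) + 1) ^ E)
          * (((n : ℝ) + 1) ^ (cB ^ 2))⁻¹ := by
          rw [pow_add, ← div_div, div_eq_mul_inv]
  calc Real.exp (-(n : ℝ) * (empEnt y + DT)) / ((n : ℝ) + 1) ^ (2 * cB ^ 2)
      ≤ (Real.exp (-(n : ℝ) * (empEnt y + DT)) / ((n : ℝ) + 1) ^ E)
        * (((n : ℝ) + 1) ^ (cB ^ 2))⁻¹ := hfinal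
    _ ≤ (((typeCls x₀).card : ℝ) * seqProb P x₀ / ((typeCls y).card : ℝ))
        * ((numCondTypes (dSeq d) Δ x₀ : ℝ))⁻¹ := by
        apply mul_le_mul step1 hNinv (by positivity) ?_
        have h0 : 0 ≤ ((typeCls x₀).card : ℝ) := by positivity
        positivity
    _ = ((condTypeClass y x₀).card : ℝ)
        * (seqProb P x₀ * (((numCondTypes (dSeq d) Δ x₀ : ℝ))⁻¹
            / ((condTypeClass x₀ y).card : ℝ))) := by
        rw [← hdivEq]; ring

end QstarAux


/-- exponential characterization of the output distribution induced by
the optimum attack channel `A*_Δ`. -/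
theorem qstar_exponential_bounds
    {A : Type} [Fintype A] [DecidableEq A] [Nonempty A]
    (d : A → A → ℝ) (hd : ∀ a b, 0 ≤ d a b) (hdrefl : ∀ a, d a a = 0)
    (P : A → ℝ) (hP : IsPMF P) (hPpos : ∀ a, 0 < P a)
    (Δ : ℝ) (hΔ : 0 ≤ Δ) {n : ℕ} (hn : 1 ≤ n) :
    ∀ y : Fin n → A,
      Real.exp (-(n : ℝ) * (empEnt y + DtildeN d Δ y P)) /
          ((n : ℝ) + 1) ^ (2 * Fintype.card A ^ 2)
        ≤ ∑ x : Fin n → A, seqProb P x * Astar (dSeq d) Δ x y ∧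
      ∑ x : Fin n → A, seqProb P x * Astar (dSeq d) Δ x y
        ≤ ((n : ℝ) + 1) ^ (Fintype.card A ^ 2) *
            Real.exp (-(n : ℝ) * (empEnt y + DtildeN d Δ y P)) := by
  intro y
  classical
  have hn' : (0 : ℝ) < n := by exact_mod_cast hn
  have hcA1 : 1 ≤ Fintype.card A := Fintype.card_pos
  set S : Finset (Fin n → A) := univ.filter (fun x => dSeq d x y ≤ (n : ℝ) * Δ) with hS
  set φ : (Fin n → A) → (A → A → ℕ) := fun x => (fun a b => QstarAux.mat x y a b) with hφ
  set T : Finset (A → A → ℕ) := S.image φ with hT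
  set DT : ℝ := DtildeN d Δ y P with hDT
  have hyd : dSeq d y y ≤ (n : ℝ) * Δ := by
    have h0 : dSeq d y y = 0 := by simp [dSeq, hdrefl]
    rw [h0]; positivity
  have hSetFin : {v | ∃ x : Fin n → A,
      dSeq d x y ≤ (n : ℝ) * Δ ∧ v = klDiv (empP x) P}.Finite := by
    apply Set.Finite.subset (Set.finite_range fun x : Fin n → A => klDiv (empP x) P)
    rintro v ⟨x, _, rfl⟩
    exact ⟨x, rfl⟩
  have hSetNe : {v | ∃ x : Fin n → A,
      dSeq d x y ≤ (n : ℝ) * Δ ∧ v = klDiv (empP x) P}.Nonempty :=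
    ⟨klDiv (empP y) P, ⟨y, hyd, rfl⟩⟩
  have hDTle : ∀ x ∈ S, DT ≤ klDiv (empP x) P := by
    intro x hx
    exact csInf_le hSetFin.bddBelow ⟨x, (Finset.mem_filter.1 hx).2, rfl⟩
  have hDTmem : DT ∈ {v | ∃ x : Fin n → A,
      dSeq d x y ≤ (n : ℝ) * Δ ∧ v = klDiv (empP x) P} :=
    hSetNe.csInf_mem hSetFin
  obtain ⟨xs, hxs_d, hxs_kl⟩ := hDTmem
  have hg0 : ∀ x ∈ (univ : Finset (Fin n → A)), x ∉ S →
      seqProb P x * Astar (dSeq d) Δ x y = 0 := by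
    intro x _ hx
    have hnot : ¬ dSeq d x y ≤ (n : ℝ) * Δ := by
      intro hcon
      exact hx (by rw [hS]; exact Finset.mem_filter.2 ⟨Finset.mem_univ _, hcon⟩)
    unfold Astar
    rw [if_neg hnot, mul_zero]
  have hmaps : ∀ x ∈ S, φ x ∈ T := fun x hx => by
    rw [hT]; exact Finset.mem_image_of_mem φ hx
  have hsplit : ∑ x : Fin n → A, seqProb P x * Astar (dSeq d) Δ x y
      = ∑ M ∈ T, ∑ x ∈ S.filter (fun x => φ x = M),
          seqProb P x * Astar (dSeq d) Δ x y := by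
    rw [← Finset.sum_subset (Finset.subset_univ S) hg0]
    exact (Finset.sum_fiberwise_of_maps_to hmaps _).symm
  have hFval : ∀ x₀ ∈ S,
      ∑ x ∈ S.filter (fun x => φ x = φ x₀), seqProb P x * Astar (dSeq d) Δ x y
        = ((condTypeClass y x₀).card : ℝ)
          * (seqProb P x₀ * Astar (dSeq d) Δ x₀ y) := by
    intro x₀ hx₀S
    have hx₀d : dSeq d x₀ y ≤ (n : ℝ) * Δ := (Finset.mem_filter.1 hx₀S).2
    have hfib : S.filter (fun x => φ x = φ x₀) = condTypeClass y x₀ := by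
      rw [hS, hφ]
      exact QstarAux.fiber_eq_ctc d Δ y x₀ hx₀d
    have hconst : ∀ x ∈ condTypeClass y x₀,
        seqProb P x * Astar (dSeq d) Δ x y = seqProb P x₀ * Astar (dSeq d) Δ x₀ y := by
      intro x hx
      have hx' := QstarAux.mem_condTypeClass.1 hx
      apply QstarAux.g_constant d Δ P y x x₀
      intro a b
      have e1 : QstarAux.mat y x b a = QstarAux.mat x y a b := QstarAux.mat_transpose x y b a
      have e2 : QstarAux.mat y x₀ b a = QstarAux.mat x₀ y a b :=
        QstarAux.mat_transpose x₀ y b a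
      rw [← e1, ← e2]
      exact hx' b a
    rw [hfib, Finset.sum_congr rfl hconst, Finset.sum_const, nsmul_eq_mul]
  have hgnn : ∀ x, 0 ≤ seqProb P x * Astar (dSeq d) Δ x y := fun x =>
    mul_nonneg (QstarAux.seqProb_nonneg P (fun a => (hPpos a).le) x)
      (QstarAux.astar_nonneg d Δ x y)
  set NR : (A → A → ℕ) → ℝ := fun M =>
    if h : ∃ x, x ∈ S ∧ φ x = M then ((numCondTypes (dSeq d) Δ h.choose : ℝ))⁻¹ else 0
    with hNRdef
  have hNRval : ∀ M, ∀ x₁, x₁ ∈ S → φ x₁ = M →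
      NR M = ((numCondTypes (dSeq d) Δ x₁ : ℝ))⁻¹ := by
    intro M x₁ hx₁ hphi
    have hex : ∃ x, x ∈ S ∧ φ x = M := ⟨x₁, hx₁, hphi⟩
    rw [hNRdef]
    simp only
    rw [dif_pos hex]
    have hmatEq : ∀ a b, QstarAux.mat hex.choose y a b = QstarAux.mat x₁ y a b := by
      intro a b
      exact congrFun (congrFun (hex.choose_spec.2.trans hphi.symm) a) b
    rw [QstarAux.numCondTypes_invariant d Δ (QstarAux.cnt_eq_of_mat_eq hmatEq)]
  have hNRnn : ∀ M, 0 ≤ NR M := by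
    intro M
    rw [hNRdef]
    simp only
    by_cases h : ∃ x, x ∈ S ∧ φ x = M
    · rw [dif_pos h]; positivity
    · rw [dif_neg h]
  have hupperM : ∀ M ∈ T,
      ∑ x ∈ S.filter (fun x => φ x = M), seqProb P x * Astar (dSeq d) Δ x y
        ≤ ((n : ℝ) + 1) ^ (Fintype.card A ^ 2 - Fintype.card A)
          * Real.exp (-(n : ℝ) * (empEnt y + DT)) * NR M := by
    intro M hM
    obtain ⟨x₀, hx₀S, hx₀M⟩ := Finset.mem_image.1 (hT ▸ hM)
    rw [← hx₀M, hFval x₀ hx₀S, hNRval (φ x₀) x₀ hx₀S rfl]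
    exact QstarAux.value_upper hn d Δ P hPpos y x₀ (Finset.mem_filter.1 hx₀S).2 DT
      (hDTle x₀ hx₀S)
  have hcnt_r : ∀ x, ∀ a, QstarAux.cnt x a = ∑ b, φ x a b := by
    intro x a
    exact QstarAux.cnt_eq_sum_mat x y a
  have hNRsum : ∑ M ∈ T, NR M ≤ ((n : ℝ) + 1) ^ (Fintype.card A) := by
    set r : (A → A → ℕ) → (A → ℕ) := fun M => (fun a => ∑ b, M a b) with hr
    set R : Finset (A → ℕ) := T.image r with hR
    have hmaps2 : ∀ M ∈ T, r M ∈ R := fun M hM => by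
      rw [hR]; exact Finset.mem_image_of_mem r hM
    have hsplit2 : ∑ M ∈ T, NR M = ∑ ρ ∈ R, ∑ M ∈ T.filter (fun M => r M = ρ), NR M :=
      (Finset.sum_fiberwise_of_maps_to hmaps2 NR).symm
    have hperρ : ∀ ρ ∈ R, ∑ M ∈ T.filter (fun M => r M = ρ), NR M ≤ 1 := by
      intro ρ hρ
      obtain ⟨M₀, hM₀T, hM₀ρ⟩ := Finset.mem_image.1 (hR ▸ hρ)
      obtain ⟨x₁, hx₁S, hx₁M⟩ := Finset.mem_image.1 (hT ▸ hM₀T)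
      have hN₁pos : 0 < numCondTypes (dSeq d) Δ x₁ :=
        QstarAux.numCondTypes_pos d hdrefl Δ hΔ x₁
      have hfibreal : ∀ M ∈ T.filter (fun M => r M = ρ),
          ∃ x₂, x₂ ∈ S ∧ φ x₂ = M ∧ (∀ a, QstarAux.cnt x₂ a = QstarAux.cnt x₁ a) := by
        intro M hMf
        obtain ⟨hMT, hMρ⟩ := Finset.mem_filter.1 hMf
        obtain ⟨x₂, hx₂S, hx₂M⟩ := Finset.mem_image.1 (hT ▸ hMT)
        refine ⟨x₂, hx₂S, hx₂M, fun a => ?_⟩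
        have e1 : QstarAux.cnt x₂ a = r M a := by rw [← hx₂M]; exact hcnt_r x₂ a
        have e2 : QstarAux.cnt x₁ a = r M₀ a := by rw [← hx₁M]; exact hcnt_r x₁ a
        rw [e1, e2, hMρ, hM₀ρ]
      have hval : ∀ M ∈ T.filter (fun M => r M = ρ),
          NR M = ((numCondTypes (dSeq d) Δ x₁ : ℝ))⁻¹ := by
        intro M hMf
        obtain ⟨x₂, hx₂S, hx₂M, hcnt⟩ := hfibreal M hMf
        rw [hNRval M x₂ hx₂S hx₂M, QstarAux.numCondTypes_invariant d Δ hcnt]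
      have hwitness : ∀ M ∈ T.filter (fun M => r M = ρ),
          ∃ σ : Equiv.Perm (Fin n), (∀ a b, QstarAux.mat x₁ (y ∘ ⇑σ⁻¹) a b = M a b)
            ∧ dSeq d x₁ (y ∘ ⇑σ⁻¹) ≤ (n : ℝ) * Δ := by
        intro M hMf
        obtain ⟨x₂, hx₂S, hx₂M, hcnt⟩ := hfibreal M hMf
        obtain ⟨σ, hσ⟩ := QstarAux.exists_perm hcnt
        refine ⟨σ, ?_, ?_⟩
        · intro a b
          have h1 : QstarAux.mat (x₁ ∘ ⇑σ) y a b = QstarAux.mat x₁ (y ∘ ⇑σ⁻¹) a b :=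
            QstarAux.mat_comp_left σ x₁ y a b
          rw [← h1, ← hσ]
          exact congrFun (congrFun hx₂M a) b
        · have h2 : dSeq d (x₁ ∘ ⇑σ) y = dSeq d x₁ (y ∘ ⇑σ⁻¹) :=
            QstarAux.dSeq_comp_left d σ x₁ y
          rw [← h2, ← hσ]
          exact (Finset.mem_filter.1 hx₂S).2
      have hcardle : (T.filter (fun M => r M = ρ)).card ≤ numCondTypes (dSeq d) Δ x₁ := by
        have hrfl : numCondTypes (dSeq d) Δ x₁
            = ((univ.filter fun y' => dSeq d x₁ y' ≤ (n : ℝ) * Δ).image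
                fun y' => condTypeClass x₁ y').card := rfl
        rw [hrfl]
        apply Finset.card_le_card_of_injOn
          (fun M => univ.filter fun y' => ∀ a b, QstarAux.mat x₁ y' a b = M a b)
        · intro M hMf
          obtain ⟨σ, hM', hd'⟩ := hwitness M hMf
          refine Finset.mem_image.2 ⟨y ∘ ⇑σ⁻¹, ?_, ?_⟩
          · simp only [Finset.mem_filter, Finset.mem_univ, true_and]
            exact hd'
          · ext y'
            simp only [QstarAux.mem_condTypeClass, Finset.mem_filter, Finset.mem_univ,
              true_and]
            constructor
            · intro h a b; rw [h a b]; exact hM' a b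
            · intro h a b; rw [h a b]; exact (hM' a b).symm
        · intro M1 h1 M2 h2 heq
          obtain ⟨σ, hM', _⟩ := hwitness M1 (Finset.mem_coe.1 h1)
          have hmem1 : (y ∘ ⇑σ⁻¹) ∈ univ.filter
              (fun y' => ∀ a b, QstarAux.mat x₁ y' a b = M1 a b) := by
            simp only [Finset.mem_filter, Finset.mem_univ, true_and]
            exact hM'
          have heq' : (univ.filter (fun y' => ∀ a b, QstarAux.mat x₁ y' a b = M1 a b))
              = (univ.filter (fun y' => ∀ a b, QstarAux.mat x₁ y' a b = M2 a b)) := heq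
          rw [heq'] at hmem1
          simp only [Finset.mem_filter, Finset.mem_univ, true_and] at hmem1
          funext a b
          rw [← hM' a b, hmem1 a b]
      rw [Finset.sum_congr rfl hval, Finset.sum_const, nsmul_eq_mul]
      have hNpos' : (0 : ℝ) < (numCondTypes (dSeq d) Δ x₁ : ℝ) := by exact_mod_cast hN₁pos
      calc ((T.filter (fun M => r M = ρ)).card : ℝ)
            * ((numCondTypes (dSeq d) Δ x₁ : ℝ))⁻¹
          ≤ (numCondTypes (dSeq d) Δ x₁ : ℝ)
            * ((numCondTypes (dSeq d) Δ x₁ : ℝ))⁻¹ := by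
            apply mul_le_mul_of_nonneg_right _ (by positivity)
            exact_mod_cast hcardle
        _ = 1 := mul_inv_cancel₀ hNpos'.ne'
    have hRcard : (R.card : ℝ) ≤ ((n : ℝ) + 1) ^ (Fintype.card A) := by
      have hb : ∀ ρ ∈ R, ∀ a, ρ a ≤ n := by
        intro ρ hρ' a
        obtain ⟨M, hMT, hMρ⟩ := Finset.mem_image.1 (hR ▸ hρ')
        obtain ⟨x₂, hx₂S, hx₂M⟩ := Finset.mem_image.1 (hT ▸ hMT)
        rw [← hMρ, ← hx₂M]
        rw [show r (φ x₂) a = QstarAux.cnt x₂ a from (hcnt_r x₂ a).symm]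
        exact QstarAux.cnt_le x₂ a
      have hnat : R.card ≤ (n + 1) ^ (Fintype.card A) := by
        have hinj : Set.InjOn (fun ρ : A → ℕ =>
            (fun a => (⟨min (ρ a) n, Nat.lt_succ_of_le (min_le_right _ _)⟩ : Fin (n + 1))))
            R := by
          intro ρ1 h1 ρ2 h2 heq
          funext a
          have e := congrFun heq a
          simp only [Fin.mk.injEq] at e
          have b1 := hb ρ1 (Finset.mem_coe.1 h1) a
          have b2 := hb ρ2 (Finset.mem_coe.1 h2) a
          omega
        have hle := Finset.card_le_card_of_injOn _ (fun ρ _ => Finset.mem_univ _) hinj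
        refine hle.trans ?_
        rw [Finset.card_univ, Fintype.card_fun, Fintype.card_fin]
      calc (R.card : ℝ) ≤ (((n + 1) ^ (Fintype.card A) : ℕ) : ℝ) := by exact_mod_cast hnat
        _ = ((n : ℝ) + 1) ^ (Fintype.card A) := by push_cast; ring
    rw [hsplit2]
    calc ∑ ρ ∈ R, ∑ M ∈ T.filter (fun M => r M = ρ), NR M
        ≤ ∑ _ρ ∈ R, (1 : ℝ) := Finset.sum_le_sum hperρ
      _ = (R.card : ℝ) := by rw [Finset.sum_const, nsmul_eq_mul, mul_one]
      _ ≤ _ := hRcard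
  have hpw : ((n : ℝ) + 1) ^ (Fintype.card A ^ 2 - Fintype.card A)
      * ((n : ℝ) + 1) ^ (Fintype.card A) = ((n : ℝ) + 1) ^ (Fintype.card A ^ 2) := by
    rw [← pow_add]
    congr 1
    have := Nat.le_self_pow two_ne_zero (Fintype.card A)
    omega
  have hupper : ∑ x : Fin n → A, seqProb P x * Astar (dSeq d) Δ x y
      ≤ ((n : ℝ) + 1) ^ (Fintype.card A ^ 2)
        * Real.exp (-(n : ℝ) * (empEnt y + DT)) := by
    rw [hsplit]
    calc ∑ M ∈ T, ∑ x ∈ S.filter (fun x => φ x = M), seqProb P x * Astar (dSeq d) Δ x y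
        ≤ ∑ M ∈ T, ((n : ℝ) + 1) ^ (Fintype.card A ^ 2 - Fintype.card A)
            * Real.exp (-(n : ℝ) * (empEnt y + DT)) * NR M :=
          Finset.sum_le_sum hupperM
      _ = ((n : ℝ) + 1) ^ (Fintype.card A ^ 2 - Fintype.card A)
            * Real.exp (-(n : ℝ) * (empEnt y + DT)) * ∑ M ∈ T, NR M := by
          rw [← Finset.mul_sum]
      _ ≤ ((n : ℝ) + 1) ^ (Fintype.card A ^ 2 - Fintype.card A)
            * Real.exp (-(n : ℝ) * (empEnt y + DT)) * (((n : ℝ) + 1) ^ (Fintype.card A)) := by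
          apply mul_le_mul_of_nonneg_left hNRsum (by positivity)
      _ = ((n : ℝ) + 1) ^ (Fintype.card A ^ 2)
            * Real.exp (-(n : ℝ) * (empEnt y + DT)) := by
          rw [← hpw]; ring
  have hxsS : xs ∈ S := by
    rw [hS]; exact Finset.mem_filter.2 ⟨Finset.mem_univ _, hxs_d⟩
  have hlower : Real.exp (-(n : ℝ) * (empEnt y + DT)) / ((n : ℝ) + 1) ^ (2 * Fintype.card A ^ 2)
      ≤ ∑ x : Fin n → A, seqProb P x * Astar (dSeq d) Δ x y := by
    rw [hsplit]
    have hterm := QstarAux.value_lower hn d hdrefl Δ hΔ P hPpos y xs hxs_d DT hxs_kl.symm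
    calc Real.exp (-(n : ℝ) * (empEnt y + DT)) / ((n : ℝ) + 1) ^ (2 * Fintype.card A ^ 2)
        ≤ ((condTypeClass y xs).card : ℝ)
            * (seqProb P xs * Astar (dSeq d) Δ xs y) := hterm
      _ = ∑ x ∈ S.filter (fun x => φ x = φ xs), seqProb P x * Astar (dSeq d) Δ x y :=
          (hFval xs hxsS).symm
      _ ≤ ∑ M ∈ T, ∑ x ∈ S.filter (fun x => φ x = M),
            seqProb P x * Astar (dSeq d) Δ x y :=
          Finset.single_le_sum
            (f := fun M => ∑ x ∈ S.filter (fun x => φ x = M),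
              seqProb P x * Astar (dSeq d) Δ x y)
            (fun M _ => Finset.sum_nonneg fun x _ => hgnn x) (hmaps xs hxsS)
  exact ⟨hlower, hupper⟩
end
end

section
/- (Theorem 8: best achievable false-negative exponent in the Neyman–Pearson setting.) Let A be a nonempty finite set, d : A × A → ℝ nonnegative with d(a,a) = 0 for all a, and let P_0, P_1 be strictly positive PMFs on A and Δ_0, Δ_1 ≥ 0. For λ ≥ 0 define f(λ) = min over PMFs P_Y on A with D̃_{Δ_0}(P_Y, P_0) ≤ λ of D̃_{Δ_1}(P_Y, P_1). Then f(λ) → f(0) as λ → 0 from the right, and f(0) = min over PMFs Q on A × A with first marginal equal to P_0 and ∑_{(a,b)} Q(a,b)·d(a,b) ≤ Δ_0 of D̃_{Δ_1}(Q_Y, P_1), where Q_Y denotes the second marginal of Q. -/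
open scoped Classical
open Finset Filter

noncomputable section

section Aux

variable {A : Type} [Fintype A]

lemma pmf_le_one {P : A → ℝ} (hP : IsPMF P) (a : A) : P a ≤ 1 := by
  rw [← hP.2]
  exact Finset.single_le_sum (fun b _ => hP.1 b) (mem_univ a)

lemma isClosed_pmfSet : IsClosed {P : A → ℝ | IsPMF P} := by
  have h : {P : A → ℝ | IsPMF P}
      = (⋂ a, {P : A → ℝ | 0 ≤ P a}) ∩ {P : A → ℝ | ∑ a, P a = 1} := by
    ext P; simp [IsPMF, Set.mem_iInter]
  rw [h]
  exact ((isClosed_iInter fun a =>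
      isClosed_le continuous_const (continuous_apply a))).inter
    (isClosed_eq (continuous_finset_sum _ fun a _ => continuous_apply a)
      continuous_const)

lemma isCompact_pmfSet : IsCompact {P : A → ℝ | IsPMF P} := by
  refine IsCompact.of_isClosed_subset
    (isCompact_univ_pi (fun _ : A => isCompact_Icc (a := (0:ℝ)) (b := 1)))
    isClosed_pmfSet ?_
  intro P hP
  simp only [Set.mem_univ_pi]
  exact fun a => ⟨hP.1 a, pmf_le_one hP a⟩

lemma continuous_margX : Continuous (margX (A := A)) := by
  unfold margX
  exact continuous_pi fun a => continuous_finset_sum _ fun b _ => continuous_apply (a, b)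

lemma continuous_margY : Continuous (margY (A := A)) := by
  unfold margY
  exact continuous_pi fun b => continuous_finset_sum _ fun a _ => continuous_apply (a, b)

lemma continuous_expDist (d : A → A → ℝ) : Continuous (expDist d) :=
  continuous_finset_sum _ fun q _ => (continuous_apply q).mul continuous_const

lemma klDiv_eq_of_pos {P : A → ℝ} (hP : ∀ a, 0 < P a) (Q : A → ℝ) :
    klDiv Q P = ∑ a, (max (Q a) 0 * Real.log (max (Q a) 0)
      - max (Q a) 0 * Real.log (P a)) := by
  unfold klDiv
  refine Finset.sum_congr rfl fun a _ => ?_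
  split_ifs with h
  · rw [max_eq_left h.le, Real.log_div (ne_of_gt h) (ne_of_gt (hP a)), mul_sub]
  · rw [max_eq_right (not_lt.mp h)]
    simp

lemma continuous_klDiv {P : A → ℝ} (hP : ∀ a, 0 < P a) :
    Continuous fun Q : A → ℝ => klDiv Q P := by
  have h : (fun Q : A → ℝ => klDiv Q P)
      = fun Q => ∑ a, (max (Q a) 0 * Real.log (max (Q a) 0)
        - max (Q a) 0 * Real.log (P a)) := funext (klDiv_eq_of_pos hP)
  rw [h]
  exact continuous_finset_sum _ fun a _ =>
    ((Real.continuous_mul_log.comp ((continuous_apply a).max continuous_const))).sub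
      (((continuous_apply a).max continuous_const).mul continuous_const)

lemma margX_pmf {Q : A × A → ℝ} (hQ : IsPMF Q) : IsPMF (margX Q) := by
  constructor
  · intro a; exact Finset.sum_nonneg fun b _ => hQ.1 (a, b)
  · rw [show (∑ a, margX Q a) = ∑ q : A × A, Q q from (Fintype.sum_prod_type Q).symm]
    exact hQ.2

lemma margY_pmf {Q : A × A → ℝ} (hQ : IsPMF Q) : IsPMF (margY Q) := by
  constructor
  · intro b; exact Finset.sum_nonneg fun a _ => hQ.1 (a, b)
  · rw [show (∑ b, margY Q b) = ∑ q : A × A, Q q from (Fintype.sum_prod_type_right Q).symm]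
    exact hQ.2

lemma klDiv_term_le {Q P : A → ℝ} (hPpos : ∀ a, 0 < P a) {a : A} (hQa : 0 < Q a) :
    Q a - P a ≤ Q a * Real.log (Q a / P a) := by
  have hx : 0 < Q a / P a := div_pos hQa (hPpos a)
  have hlog : 1 - (Q a / P a)⁻¹ ≤ Real.log (Q a / P a) := by
    have h := Real.log_le_sub_one_of_pos (inv_pos.mpr hx)
    rw [Real.log_inv] at h
    linarith
  have h2 : Q a * (1 - (Q a / P a)⁻¹) = Q a - P a := by
    rw [inv_div]
    field_simp
  calc Q a - P a = Q a * (1 - (Q a / P a)⁻¹) := h2.symm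
    _ ≤ Q a * Real.log (Q a / P a) := mul_le_mul_of_nonneg_left hlog hQa.le

lemma klDiv_term_lt {Q P : A → ℝ} (hPpos : ∀ a, 0 < P a) {a : A} (hQa : 0 < Q a)
    (hne : Q a ≠ P a) : Q a - P a < Q a * Real.log (Q a / P a) := by
  have hx : 0 < Q a / P a := div_pos hQa (hPpos a)
  have hx1 : Q a / P a ≠ 1 := by
    intro h
    have := (div_eq_iff (ne_of_gt (hPpos a))).mp h
    rw [one_mul] at this
    exact hne this
  have hlog : 1 - (Q a / P a)⁻¹ < Real.log (Q a / P a) := by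
    have h := Real.log_lt_sub_one_of_pos (inv_pos.mpr hx)
      (fun h => hx1 (inv_eq_one.mp h))
    rw [Real.log_inv] at h
    linarith
  have h2 : Q a * (1 - (Q a / P a)⁻¹) = Q a - P a := by
    rw [inv_div]
    field_simp
  calc Q a - P a = Q a * (1 - (Q a / P a)⁻¹) := h2.symm
    _ < Q a * Real.log (Q a / P a) := mul_lt_mul_of_pos_left hlog hQa

lemma klDiv_ge_one_sub {Q P : A → ℝ} (hQ : IsPMF Q) (hPpos : ∀ a, 0 < P a) :
    1 - ∑ a ∈ univ.filter (fun a => 0 < Q a), P a ≤ klDiv Q P := by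
  classical
  set S := univ.filter (fun a => 0 < Q a) with hS
  have hkl : klDiv Q P = ∑ a ∈ S, Q a * Real.log (Q a / P a) :=
    (Finset.sum_filter _ _).symm
  have hSQ : ∑ a ∈ S, Q a = 1 := by
    rw [← hQ.2]
    refine Finset.sum_subset (filter_subset _ _) (fun a _ ha => ?_)
    have : ¬ 0 < Q a := by simpa [hS] using ha
    exact le_antisymm (not_lt.mp this) (hQ.1 a)
  have hterm : ∀ a ∈ S, Q a - P a ≤ Q a * Real.log (Q a / P a) := by
    intro a ha
    exact klDiv_term_le hPpos (by simpa [hS] using ha)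
  calc 1 - ∑ a ∈ S, P a = ∑ a ∈ S, (Q a - P a) := by
        rw [Finset.sum_sub_distrib, hSQ]
    _ ≤ ∑ a ∈ S, Q a * Real.log (Q a / P a) := Finset.sum_le_sum hterm
    _ = klDiv Q P := hkl.symm

lemma klDiv_nonneg {Q P : A → ℝ} (hQ : IsPMF Q) (hP : IsPMF P)
    (hPpos : ∀ a, 0 < P a) : 0 ≤ klDiv Q P := by
  have h1 := klDiv_ge_one_sub hQ hPpos
  have h2 : ∑ a ∈ univ.filter (fun a => 0 < Q a), P a ≤ 1 := by
    rw [← hP.2]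
    exact Finset.sum_le_sum_of_subset_of_nonneg (filter_subset _ _)
      (fun a _ _ => hP.1 a)
  linarith

lemma eq_of_klDiv_nonpos {Q P : A → ℝ} (hQ : IsPMF Q) (hP : IsPMF P)
    (hPpos : ∀ a, 0 < P a) (hle : klDiv Q P ≤ 0) : Q = P := by
  classical
  by_contra hne
  obtain ⟨a0, ha0⟩ := Function.ne_iff.mp hne
  set S := univ.filter (fun a => 0 < Q a) with hS
  have hkl : klDiv Q P = ∑ a ∈ S, Q a * Real.log (Q a / P a) :=
    (Finset.sum_filter _ _).symm
  have hSQ : ∑ a ∈ S, Q a = 1 := by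
    rw [← hQ.2]
    refine Finset.sum_subset (filter_subset _ _) (fun a _ ha => ?_)
    have : ¬ 0 < Q a := by simpa [hS] using ha
    exact le_antisymm (not_lt.mp this) (hQ.1 a)
  have hPS : ∑ a ∈ S, P a ≤ 1 := by
    rw [← hP.2]
    exact Finset.sum_le_sum_of_subset_of_nonneg (filter_subset _ _)
      (fun a _ _ => hP.1 a)
  rcases lt_or_ge 0 (Q a0) with hpos | hnonpos
  · have ha0S : a0 ∈ S := by simp [hS, hpos]
    have hstrict : ∑ a ∈ S, (Q a - P a) < ∑ a ∈ S, Q a * Real.log (Q a / P a) := by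
      refine Finset.sum_lt_sum (fun a ha => klDiv_term_le hPpos (by simpa [hS] using ha))
        ⟨a0, ha0S, klDiv_term_lt hPpos hpos ha0⟩
    have hsum : ∑ a ∈ S, (Q a - P a) = 1 - ∑ a ∈ S, P a := by
      rw [Finset.sum_sub_distrib, hSQ]
    rw [hkl] at hle
    rw [hsum] at hstrict
    linarith
  · have hQa0 : Q a0 = 0 := le_antisymm hnonpos (hQ.1 a0)
    have ha0S : a0 ∉ S := by simp [hS, hQa0]
    have hsub : S ⊆ univ.erase a0 := by
      intro a ha
      refine Finset.mem_erase.mpr ⟨fun h => ha0S (h ▸ ha), mem_univ a⟩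
    have h1 : ∑ a ∈ S, P a ≤ ∑ a ∈ univ.erase a0, P a :=
      Finset.sum_le_sum_of_subset_of_nonneg hsub (fun a _ _ => hP.1 a)
    have h2 : ∑ a ∈ univ.erase a0, P a = 1 - P a0 := by
      rw [Finset.sum_erase_eq_sub (mem_univ a0), hP.2]
    have h3 := klDiv_ge_one_sub hQ hPpos
    have := hPpos a0
    rw [← hS] at h3
    linarith

lemma klDiv_self_of_pos {P : A → ℝ} (hPpos : ∀ a, 0 < P a) : klDiv P P = 0 := by
  unfold klDiv
  refine Finset.sum_eq_zero fun a _ => ?_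
  rw [if_pos (hPpos a), div_self (ne_of_gt (hPpos a)), Real.log_one, mul_zero]

/-- The diagonal coupling of a PMF. -/
def diagC (PY : A → ℝ) : A × A → ℝ := fun q => if q.1 = q.2 then PY q.2 else 0

lemma diagC_pmf {PY : A → ℝ} (hPY : IsPMF PY) : IsPMF (diagC PY) := by
  constructor
  · intro q
    unfold diagC
    split_ifs
    · exact hPY.1 _
    · exact le_refl _
  · rw [Fintype.sum_prod_type]
    rw [← hPY.2]
    refine Finset.sum_congr rfl fun a _ => ?_
    simp [diagC]

lemma diagC_margY (PY : A → ℝ) : margY (diagC PY) = PY := by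
  funext b
  unfold margY diagC
  simp

lemma diagC_margX (PY : A → ℝ) : margX (diagC PY) = PY := by
  funext a
  unfold margX diagC
  simp

lemma diagC_expDist {d : A → A → ℝ} (hdrefl : ∀ a, d a a = 0) (PY : A → ℝ) :
    expDist d (diagC PY) = 0 := by
  unfold expDist diagC
  refine Finset.sum_eq_zero fun q _ => ?_
  split_ifs with h
  · rw [show q.1 = q.2 from h, hdrefl, mul_zero]
  · rw [zero_mul]

lemma dtilde_bddBelow (d : A → A → ℝ) (Δ : ℝ) (PY : A → ℝ) {P : A → ℝ}
    (hP : IsPMF P) (hPpos : ∀ a, 0 < P a) :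
    BddBelow {v | ∃ Q : A × A → ℝ,
      IsPMF Q ∧ margY Q = PY ∧ expDist d Q ≤ Δ ∧ v = klDiv (margX Q) P} := by
  refine ⟨0, fun v hv => ?_⟩
  obtain ⟨Q, hQ, -, -, rfl⟩ := hv
  exact klDiv_nonneg (margX_pmf hQ) hP hPpos

lemma dtilde_le {d : A → A → ℝ} {Δ : ℝ} {PY P : A → ℝ}
    (hP : IsPMF P) (hPpos : ∀ a, 0 < P a) {Q : A × A → ℝ}
    (hQ : IsPMF Q) (hY : margY Q = PY) (hE : expDist d Q ≤ Δ) :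
    Dtilde d Δ PY P ≤ klDiv (margX Q) P :=
  csInf_le (dtilde_bddBelow d Δ PY hP hPpos) ⟨Q, hQ, hY, hE, rfl⟩

lemma dtilde_nonneg {d : A → A → ℝ} (hdrefl : ∀ a, d a a = 0) {Δ : ℝ}
    (hΔ : 0 ≤ Δ) {PY P : A → ℝ} (hPY : IsPMF PY)
    (hP : IsPMF P) (hPpos : ∀ a, 0 < P a) : 0 ≤ Dtilde d Δ PY P := by
  refine le_csInf ⟨_, diagC PY, diagC_pmf hPY, diagC_margY PY,
    (diagC_expDist hdrefl PY).le.trans hΔ, rfl⟩ ?_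
  rintro v ⟨Q, hQ, -, -, rfl⟩
  exact klDiv_nonneg (margX_pmf hQ) hP hPpos

lemma dtilde_attain {d : A → A → ℝ} (hdrefl : ∀ a, d a a = 0) {Δ : ℝ}
    (hΔ : 0 ≤ Δ) {PY P : A → ℝ} (hPY : IsPMF PY)
    (hP : IsPMF P) (hPpos : ∀ a, 0 < P a) :
    ∃ Q : A × A → ℝ, IsPMF Q ∧ margY Q = PY ∧ expDist d Q ≤ Δ ∧
      klDiv (margX Q) P = Dtilde d Δ PY P := by
  classical
  set K : Set (A × A → ℝ) := {Q | IsPMF Q ∧ margY Q = PY ∧ expDist d Q ≤ Δ} with hK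
  have hKc : IsCompact K := by
    have hKeq : K = {Q : A × A → ℝ | IsPMF Q}
        ∩ {Q | margY Q = PY ∧ expDist d Q ≤ Δ} := rfl
    rw [hKeq]
    exact isCompact_pmfSet.inter_right
      ((isClosed_eq continuous_margY continuous_const).inter
        (isClosed_le (continuous_expDist d) continuous_const))
  have hKne : K.Nonempty :=
    ⟨diagC PY, diagC_pmf hPY, diagC_margY PY, (diagC_expDist hdrefl PY).le.trans hΔ⟩
  obtain ⟨Q, hQK, hmin⟩ := hKc.exists_isMinOn hKne
    (((continuous_klDiv hPpos).comp continuous_margX).continuousOn)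
  refine ⟨Q, hQK.1, hQK.2.1, hQK.2.2, ?_⟩
  refine le_antisymm ?_ (dtilde_le hP hPpos hQK.1 hQK.2.1 hQK.2.2)
  refine le_csInf ⟨_, Q, hQK.1, hQK.2.1, hQK.2.2, rfl⟩ ?_
  rintro v ⟨Q', hQ', hY', hE', rfl⟩
  exact isMinOn_iff.mp hmin Q' ⟨hQ', hY', hE'⟩

end Aux

/-- Theorem 8: best achievable false-negative exponent in the
Neyman–Pearson setting. -/
theorem best_np_fn_exponent
    {A : Type} [Fintype A] [Nonempty A]
    (d : A → A → ℝ) (hd : ∀ a b, 0 ≤ d a b) (hdrefl : ∀ a, d a a = 0)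
    (P0 P1 : A → ℝ) (hP0 : IsPMF P0) (hP1 : IsPMF P1)
    (hP0pos : ∀ a, 0 < P0 a) (hP1pos : ∀ a, 0 < P1 a)
    (Δ0 Δ1 : ℝ) (hΔ0 : 0 ≤ Δ0) (hΔ1 : 0 ≤ Δ1) :
    Tendsto
      (fun lam : ℝ => sInf {v | ∃ PY : A → ℝ,
        IsPMF PY ∧ Dtilde d Δ0 PY P0 ≤ lam ∧ v = Dtilde d Δ1 PY P1})
      (nhdsWithin 0 (Set.Ioi 0))
      (nhds (sInf {v | ∃ PY : A → ℝ,
        IsPMF PY ∧ Dtilde d Δ0 PY P0 ≤ 0 ∧ v = Dtilde d Δ1 PY P1})) ∧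
    sInf {v | ∃ PY : A → ℝ,
        IsPMF PY ∧ Dtilde d Δ0 PY P0 ≤ 0 ∧ v = Dtilde d Δ1 PY P1}
      = sInf {v | ∃ Q : A × A → ℝ,
        IsPMF Q ∧ margX Q = P0 ∧ expDist d Q ≤ Δ0 ∧ v = Dtilde d Δ1 (margY Q) P1} := by
  classical
  set G : ℝ → Set ℝ := fun lam => {v | ∃ Q : A × A → ℝ,
      IsPMF Q ∧ expDist d Q ≤ Δ0 ∧ klDiv (margX Q) P0 ≤ lam ∧
      v = Dtilde d Δ1 (margY Q) P1} with hG
  have hSG : ∀ lam : ℝ, 0 ≤ lam →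
      {v | ∃ PY : A → ℝ,
        IsPMF PY ∧ Dtilde d Δ0 PY P0 ≤ lam ∧ v = Dtilde d Δ1 PY P1} = G lam := by
    intro lam hlam
    ext v
    constructor
    · rintro ⟨PY, hPY, hle, rfl⟩
      obtain ⟨Q, hQ, hY, hE, hkl⟩ := dtilde_attain hdrefl hΔ0 hPY hP0 hP0pos
      exact ⟨Q, hQ, hE, by rw [hkl]; exact hle, by rw [hY]⟩
    · rintro ⟨Q, hQ, hE, hkl, rfl⟩
      exact ⟨margY Q, margY_pmf hQ,
        le_trans (dtilde_le hP0 hP0pos hQ rfl hE) hkl, rfl⟩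
  have hGne : ∀ lam : ℝ, 0 ≤ lam → (G lam).Nonempty := by
    intro lam hlam
    refine ⟨_, diagC P0, diagC_pmf hP0, (diagC_expDist hdrefl P0).le.trans hΔ0, ?_, rfl⟩
    rw [diagC_margX, klDiv_self_of_pos hP0pos]
    exact hlam
  have hGbdd : ∀ lam : ℝ, BddBelow (G lam) := by
    intro lam
    refine ⟨0, ?_⟩
    rintro v ⟨Q, hQ, -, -, rfl⟩
    exact dtilde_nonneg hdrefl hΔ1 (margY_pmf hQ) hP1 hP1pos
  have hmono : ∀ lam mu : ℝ, 0 ≤ lam → lam ≤ mu → sInf (G mu) ≤ sInf (G lam) := by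
    intro lam mu h0 hlm
    refine csInf_le_csInf (hGbdd mu) (hGne lam h0) ?_
    rintro v ⟨Q, h1, h2, h3, h4⟩
    exact ⟨Q, h1, h2, h3.trans hlm, h4⟩
  have hkey : ∀ ε : ℝ, 0 < ε → ∃ δ : ℝ, 0 < δ ∧ sInf (G 0) - ε < sInf (G δ) := by
    intro ε hε
    by_contra hcon
    push_neg at hcon
    have hex : ∀ n : ℕ, ∃ QR : (A × A → ℝ) × (A × A → ℝ),
        IsPMF QR.1 ∧ IsPMF QR.2 ∧ expDist d QR.1 ≤ Δ0 ∧
        klDiv (margX QR.1) P0 ≤ ((n : ℝ) + 1)⁻¹ ∧ margY QR.2 = margY QR.1 ∧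
        expDist d QR.2 ≤ Δ1 ∧
        klDiv (margX QR.2) P1 < sInf (G 0) - ε + ((n : ℝ) + 1)⁻¹ := by
      intro n
      have hδ : (0 : ℝ) < ((n : ℝ) + 1)⁻¹ := by positivity
      have h1 : sInf (G ((n : ℝ) + 1)⁻¹) < sInf (G 0) - ε + ((n : ℝ) + 1)⁻¹ :=
        lt_of_le_of_lt (hcon _ hδ) (by linarith)
      obtain ⟨v, hvG, hvlt⟩ := exists_lt_of_csInf_lt (hGne _ hδ.le) h1
      obtain ⟨Q, hQ, hE, hkl, rfl⟩ := hvG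
      obtain ⟨R, hR, hRY, hRE, hRkl⟩ :=
        dtilde_attain hdrefl hΔ1 (margY_pmf hQ) hP1 hP1pos
      exact ⟨(Q, R), hQ, hR, hE, hkl, hRY, hRE, by rw [hRkl]; exact hvlt⟩
    choose Z h1 h2 h3 h4 h5 h6 h7 using hex
    have hcpt : IsCompact
        (({P : A × A → ℝ | IsPMF P}) ×ˢ ({P : A × A → ℝ | IsPMF P})) :=
      isCompact_pmfSet.prod isCompact_pmfSet
    obtain ⟨zs, hmem, φ, hφ, hconv⟩ :=
      hcpt.tendsto_subseq (x := Z) (fun n => Set.mk_mem_prod (h1 n) (h2 n))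
    obtain ⟨Qs, Rs⟩ := zs
    have hQconv : Tendsto (fun k => (Z (φ k)).1) atTop (nhds Qs) :=
      (continuous_fst.tendsto _).comp hconv
    have hRconv : Tendsto (fun k => (Z (φ k)).2) atTop (nhds Rs) :=
      (continuous_snd.tendsto _).comp hconv
    have hinv : Tendsto (fun k : ℕ => ((k : ℝ) + 1)⁻¹) atTop (nhds 0) := by
      simpa [one_div] using tendsto_one_div_add_atTop_nhds_zero_nat (𝕜 := ℝ)
    have hbound : ∀ k : ℕ, ((φ k : ℝ) + 1)⁻¹ ≤ ((k : ℝ) + 1)⁻¹ := by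
      intro k
      have hk : (k : ℝ) ≤ (φ k : ℝ) := Nat.cast_le.mpr hφ.le_apply
      exact inv_anti₀ (by positivity) (by linarith)
    have hQs : IsPMF Qs := hmem.1
    have hRs : IsPMF Rs := hmem.2
    have hEQ : expDist d Qs ≤ Δ0 :=
      le_of_tendsto' (((continuous_expDist d).tendsto _).comp hQconv)
        (fun k => h3 (φ k))
    have hER : expDist d Rs ≤ Δ1 :=
      le_of_tendsto' (((continuous_expDist d).tendsto _).comp hRconv)
        (fun k => h6 (φ k))
    have hklQ : klDiv (margX Qs) P0 ≤ 0 :=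
      le_of_tendsto_of_tendsto'
        ((((continuous_klDiv hP0pos).comp continuous_margX).tendsto _).comp hQconv)
        hinv (fun k => (h4 (φ k)).trans (hbound k))
    have hYs : margY Rs = margY Qs := by
      have t1 : Tendsto (fun k => margY ((Z (φ k)).2)) atTop (nhds (margY Rs)) :=
        (continuous_margY.tendsto _).comp hRconv
      have t2 : Tendsto (fun k => margY ((Z (φ k)).2)) atTop (nhds (margY Qs)) :=
        Tendsto.congr (fun k => (h5 (φ k)).symm)
          ((continuous_margY.tendsto _).comp hQconv)
      exact tendsto_nhds_unique t1 t2
    have hklR : klDiv (margX Rs) P1 ≤ sInf (G 0) - ε := by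
      have hc : Tendsto (fun k : ℕ => sInf (G 0) - ε + ((k : ℝ) + 1)⁻¹) atTop
          (nhds (sInf (G 0) - ε)) := by
        simpa using tendsto_const_nhds.add hinv
      refine le_of_tendsto_of_tendsto'
        ((((continuous_klDiv hP1pos).comp continuous_margX).tendsto _).comp hRconv)
        hc (fun k => le_trans (h7 (φ k)).le ?_)
      have := hbound k
      linarith
    have hQsG0 : Dtilde d Δ1 (margY Qs) P1 ∈ G 0 := ⟨Qs, hQs, hEQ, hklQ, rfl⟩
    have hle1 : sInf (G 0) ≤ Dtilde d Δ1 (margY Qs) P1 := csInf_le (hGbdd 0) hQsG0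
    have hle2 : Dtilde d Δ1 (margY Qs) P1 ≤ klDiv (margX Rs) P1 :=
      dtilde_le hP1 hP1pos hRs hYs hER
    linarith
  constructor
  · rw [hSG 0 le_rfl]
    have hco : (fun lam : ℝ => sInf {v | ∃ PY : A → ℝ,
        IsPMF PY ∧ Dtilde d Δ0 PY P0 ≤ lam ∧ v = Dtilde d Δ1 PY P1})
        =ᶠ[nhdsWithin (0:ℝ) (Set.Ioi 0)] fun lam => sInf (G lam) := by
      filter_upwards [self_mem_nhdsWithin] with lam hlam
      rw [hSG lam (le_of_lt hlam)]
    rw [tendsto_congr' hco, Metric.tendsto_nhdsWithin_nhds]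
    intro ε hε
    obtain ⟨δ, hδ, hgδ⟩ := hkey ε hε
    refine ⟨δ, hδ, fun lam hlam hdist => ?_⟩
    have hlam0 : (0:ℝ) < lam := hlam
    have hlamδ : lam ≤ δ := by
      rw [Real.dist_eq, sub_zero, abs_of_pos hlam0] at hdist
      exact hdist.le
    have hup : sInf (G lam) ≤ sInf (G 0) := hmono 0 lam le_rfl hlam0.le
    have hlow : sInf (G δ) ≤ sInf (G lam) := hmono lam δ hlam0.le hlamδ
    rw [Real.dist_eq, abs_of_nonpos (by linarith)]
    linarith
  · rw [hSG 0 le_rfl]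
    congr 1
    ext v
    constructor
    · rintro ⟨Q, hQ, hE, hkl, rfl⟩
      exact ⟨Q, hQ, eq_of_klDiv_nonpos (margX_pmf hQ) hP0 hP0pos hkl, hE, rfl⟩
    · rintro ⟨Q, hQ, hX, hE, rfl⟩
      exact ⟨Q, hQ, hE, by rw [hX, klDiv_self_of_pos hP0pos], rfl⟩
end
end

section
/- (Corollary 2, first part: explicit minimization of the EMD under an EMD constraint, metric case.) Let A be a nonempty finite set and let d : A × A → ℝ be a metric on A (nonnegative, d(a,b) = 0 iff a = b, symmetric, satisfying the triangle inequality). Let P_0, P be PMFs on A and Δ_0 ≥ 0. Then min over PMFs P_Y on A with EMD_d(P_Y, P_0) ≤ Δ_0 of EMD_d(P_Y, P) equals max{ EMD_d(P_0, P) − Δ_0, 0 }. -/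
open scoped Classical
open Finset Filter

noncomputable section

section EMDAux
variable {A : Type} [Fintype A]

variable {A : Type} [Fintype A]

def emdSet (d : A → A → ℝ) (P P' : A → ℝ) : Set ℝ :=
  {v | ∃ R : A × A → ℝ, IsPMF R ∧ margX R = P ∧ margY R = P' ∧ v = expDist d R}

lemma EMD_def (d : A → A → ℝ) (P P' : A → ℝ) : EMD d P P' = sInf (emdSet d P P') := rfl

lemma emdSet_lb (d : A → A → ℝ) (hd : ∀ a b, 0 ≤ d a b) (P P' : A → ℝ) :
    ∀ v ∈ emdSet d P P', (0:ℝ) ≤ v := by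
  rintro v ⟨R, hR, -, -, rfl⟩
  exact Finset.sum_nonneg fun q _ => mul_nonneg (hR.1 q) (hd q.1 q.2)

lemma emdSet_bdd (d : A → A → ℝ) (hd : ∀ a b, 0 ≤ d a b) (P P' : A → ℝ) :
    BddBelow (emdSet d P P') := ⟨0, emdSet_lb d hd P P'⟩

lemma emdSet_nonempty (d : A → A → ℝ) {P P' : A → ℝ} (hP : IsPMF P) (hP' : IsPMF P') :
    (emdSet d P P').Nonempty := by
  refine ⟨_, fun q => P q.1 * P' q.2, ⟨fun q => mul_nonneg (hP.1 _) (hP'.1 _), ?_⟩, ?_, ?_, rfl⟩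
  · rw [Fintype.sum_prod_type]
    simp only [← Finset.mul_sum, hP'.2, mul_one, hP.2]
  · funext a; simp [margX, ← Finset.mul_sum, hP'.2]
  · funext b; simp [margY, ← Finset.sum_mul, hP.2]

lemma EMD_nonneg (d : A → A → ℝ) (hd : ∀ a b, 0 ≤ d a b) (P P' : A → ℝ) :
    0 ≤ EMD d P P' :=
  Real.sInf_nonneg (emdSet_lb d hd P P')

lemma EMD_le_cost (d : A → A → ℝ) (hd : ∀ a b, 0 ≤ d a b) {P P' : A → ℝ}
    {R : A × A → ℝ} (hR : IsPMF R) (hX : margX R = P) (hY : margY R = P') :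
    EMD d P P' ≤ expDist d R :=
  csInf_le (emdSet_bdd d hd P P') ⟨R, hR, hX, hY, rfl⟩

lemma EMD_symm (d : A → A → ℝ) (hdsymm : ∀ a b, d a b = d b a) (P P' : A → ℝ) :
    EMD d P P' = EMD d P' P := by
  rw [EMD_def, EMD_def]
  congr 1
  ext v
  constructor <;> rintro ⟨R, hR, hX, hY, rfl⟩ <;>
  · refine ⟨fun q => R (q.2, q.1), ⟨fun q => hR.1 _, ?_⟩, ?_, ?_, ?_⟩
    · rw [← hR.2]
      exact Fintype.sum_equiv (Equiv.prodComm A A) _ _ (fun q => rfl)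
    · funext a; exact congrFun hY a
    · funext b; exact congrFun hX b
    · unfold expDist
      refine Fintype.sum_equiv (Equiv.prodComm A A) _ _ (fun q => ?_)
      simp [hdsymm q.1 q.2]



lemma glue (d : A → A → ℝ) (hd : ∀ a b, 0 ≤ d a b)
    (hdtri : ∀ a b c, d a c ≤ d a b + d b c)
    {P0 PY P : A → ℝ} {R1 R2 : A × A → ℝ}
    (h1 : IsPMF R1) (h1X : margX R1 = P0) (h1Y : margY R1 = PY)
    (h2 : IsPMF R2) (h2X : margX R2 = PY) (h2Y : margY R2 = P) :
    ∃ R3 : A × A → ℝ, IsPMF R3 ∧ margX R3 = P0 ∧ margY R3 = P ∧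
      expDist d R3 ≤ expDist d R1 + expDist d R2 := by
  have hPY : ∀ b, 0 ≤ PY b := fun b => by
    rw [← h1Y]; exact Finset.sum_nonneg fun a _ => h1.1 _
  have hR1z : ∀ a b, PY b = 0 → R1 (a, b) = 0 := by
    intro a b hb
    have hle : R1 (a, b) ≤ PY b := by
      rw [← h1Y]
      exact Finset.single_le_sum (fun a' _ => h1.1 (a', b)) (mem_univ a)
    exact le_antisymm (hb ▸ hle) (h1.1 _)
  have hR2z : ∀ b c, PY b = 0 → R2 (b, c) = 0 := by
    intro b c hb
    have hle : R2 (b, c) ≤ PY b := by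
      rw [← h2X]
      exact Finset.single_le_sum (fun c' _ => h2.1 (b, c')) (mem_univ c)
    exact le_antisymm (hb ▸ hle) (h2.1 _)
  have h2sum : ∀ b, ∑ c, R2 (b, c) = PY b := fun b => congrFun h2X b
  have h1sum : ∀ b, ∑ a, R1 (a, b) = PY b := fun b => congrFun h1Y b
  refine ⟨fun q => ∑ b, R1 (q.1, b) * R2 (b, q.2) / PY b, ⟨?_, ?_⟩, ?_, ?_, ?_⟩
  case _ =>  -- nonneg
    intro q
    exact Finset.sum_nonneg fun b _ =>
      div_nonneg (mul_nonneg (h1.1 _) (h2.1 _)) (hPY b)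
  -- margX lemma first as a `have` used twice
  all_goals
    have keyX : ∀ a, (∑ c, ∑ b, R1 (a, b) * R2 (b, c) / PY b) = P0 a := by
      intro a
      rw [Finset.sum_comm]
      rw [← h1X]
      refine Finset.sum_congr rfl fun b _ => ?_
      by_cases hb : PY b = 0
      · simp [hR1z a b hb]
      · rw [← Finset.sum_div, ← Finset.mul_sum, h2sum b, mul_div_assoc,
          div_self hb, mul_one]
    have keyY : ∀ c, (∑ a, ∑ b, R1 (a, b) * R2 (b, c) / PY b) = P c := by
      intro c
      rw [Finset.sum_comm]
      rw [← h2Y]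
      show _ = ∑ b, R2 (b, c)
      refine Finset.sum_congr rfl fun b _ => ?_
      by_cases hb : PY b = 0
      · simp [hR1z _ b hb, hR2z b c hb]
      · rw [← Finset.sum_div, ← Finset.sum_mul, h1sum b, mul_comm, mul_div_assoc,
          div_self hb, mul_one]
  case _ =>  -- total sum = 1
    rw [Fintype.sum_prod_type]
    have : ∀ a, (∑ c, ∑ b, R1 (a, b) * R2 (b, c) / PY b) = P0 a := keyX
    calc (∑ a, ∑ c, ∑ b, R1 (a, b) * R2 (b, c) / PY b) = ∑ a, P0 a := by
          exact Finset.sum_congr rfl fun a _ => keyX a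
      _ = ∑ q : A × A, R1 q := by rw [← h1X]; rw [Fintype.sum_prod_type]; rfl
      _ = 1 := h1.2
  case _ =>  -- margX
    funext a; exact keyX a
  case _ =>  -- margY
    funext c; exact keyY c
  case _ =>  -- cost
    have expand : expDist d (fun q => ∑ b, R1 (q.1, b) * R2 (b, q.2) / PY b)
        = ∑ a, ∑ c, ∑ b, R1 (a, b) * R2 (b, c) / PY b * d a c := by
      unfold expDist
      rw [Fintype.sum_prod_type]
      refine Finset.sum_congr rfl fun a _ => Finset.sum_congr rfl fun c _ => ?_
      rw [Finset.sum_mul]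
    rw [expand]
    have step1 : (∑ a, ∑ c, ∑ b, R1 (a, b) * R2 (b, c) / PY b * d a c)
        ≤ ∑ a, ∑ c, ∑ b, R1 (a, b) * R2 (b, c) / PY b * (d a b + d b c) := by
      refine Finset.sum_le_sum fun a _ => Finset.sum_le_sum fun c _ =>
        Finset.sum_le_sum fun b _ => ?_
      exact mul_le_mul_of_nonneg_left (hdtri a b c)
        (div_nonneg (mul_nonneg (h1.1 _) (h2.1 _)) (hPY b))
    refine step1.trans (le_of_eq ?_)
    have split : (∑ a, ∑ c, ∑ b, R1 (a, b) * R2 (b, c) / PY b * (d a b + d b c))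
        = (∑ a, ∑ c, ∑ b, R1 (a, b) * R2 (b, c) / PY b * d a b)
          + (∑ a, ∑ c, ∑ b, R1 (a, b) * R2 (b, c) / PY b * d b c) := by
      rw [← Finset.sum_add_distrib]
      refine Finset.sum_congr rfl fun a _ => ?_
      rw [← Finset.sum_add_distrib]
      refine Finset.sum_congr rfl fun c _ => ?_
      rw [← Finset.sum_add_distrib]
      exact Finset.sum_congr rfl fun b _ => mul_add _ _ _
    rw [split]
    congr 1
    · -- = expDist d R1
      unfold expDist
      rw [Fintype.sum_prod_type]
      refine Finset.sum_congr rfl fun a _ => ?_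
      rw [Finset.sum_comm]
      refine Finset.sum_congr rfl fun b _ => ?_
      by_cases hb : PY b = 0
      · simp [hR1z a b hb]
      · have : ∀ c, R1 (a, b) * R2 (b, c) / PY b * d a b
            = R1 (a, b) * d a b / PY b * R2 (b, c) := fun c => by ring
        simp only [this]
        rw [← Finset.mul_sum, h2sum b, div_mul_cancel₀ _ hb]
    · -- = expDist d R2
      unfold expDist
      rw [Fintype.sum_prod_type]
      have e1 : ∀ a, (∑ c, ∑ b, R1 (a, b) * R2 (b, c) / PY b * d b c)
          = ∑ b, ∑ c, R1 (a, b) * R2 (b, c) / PY b * d b c := fun a =>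
        Finset.sum_comm
      simp only [e1]
      rw [Finset.sum_comm]
      refine Finset.sum_congr rfl fun b _ => ?_
      rw [Finset.sum_comm]
      refine Finset.sum_congr rfl fun c _ => ?_
      by_cases hb : PY b = 0
      · simp [hR1z _ b hb, hR2z b c hb]
      · have : ∀ a, R1 (a, b) * R2 (b, c) / PY b * d b c
            = R2 (b, c) * d b c / PY b * R1 (a, b) := fun a => by ring
        simp only [this]
        rw [← Finset.mul_sum, h1sum b, div_mul_cancel₀ _ hb]

lemma EMD_triangle (d : A → A → ℝ) (hd : ∀ a b, 0 ≤ d a b)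
    (hdtri : ∀ a b c, d a c ≤ d a b + d b c)
    {P0 PY P : A → ℝ} (hP0 : IsPMF P0) (hPY : IsPMF PY) (hP : IsPMF P) :
    EMD d P0 P ≤ EMD d P0 PY + EMD d PY P := by
  have hne1 := emdSet_nonempty d hP0 hPY
  have hne2 := emdSet_nonempty d hPY hP
  have key : ∀ c1 ∈ emdSet d P0 PY, ∀ c2 ∈ emdSet d PY P, EMD d P0 P ≤ c1 + c2 := by
    rintro c1 ⟨R1, h1, h1X, h1Y, rfl⟩ c2 ⟨R2, h2, h2X, h2Y, rfl⟩
    obtain ⟨R3, h3, h3X, h3Y, h3c⟩ := glue d hd hdtri h1 h1X h1Y h2 h2X h2Y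
    exact (EMD_le_cost d hd h3 h3X h3Y).trans h3c
  have step : ∀ c1 ∈ emdSet d P0 PY, EMD d P0 P - c1 ≤ EMD d PY P := by
    intro c1 hc1
    rw [EMD_def d PY P]
    refine le_csInf hne2 fun c2 hc2 => ?_
    linarith [key c1 hc1 c2 hc2]
  have final : EMD d P0 P - EMD d PY P ≤ EMD d P0 PY := by
    rw [EMD_def d P0 PY]
    refine le_csInf hne1 fun c1 hc1 => ?_
    linarith [step c1 hc1]
  linarith

/-- The diagonal coupling of a PMF with itself. -/
lemma diag_coupling {P : A → ℝ} (hP : IsPMF P) :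
    IsPMF (fun q : A × A => if q.1 = q.2 then P q.1 else 0)
    ∧ margX (fun q : A × A => if q.1 = q.2 then P q.1 else 0) = P
    ∧ margY (fun q : A × A => if q.1 = q.2 then P q.1 else 0) = P := by
  refine ⟨⟨fun q => ?_, ?_⟩, ?_, ?_⟩
  · dsimp only; split
    · exact hP.1 _
    · exact le_refl 0
  · rw [Fintype.sum_prod_type]
    simp [hP.2]
  · funext a; simp [margX]
  · funext b; simp [margY]

lemma diag_cost {P : A → ℝ} (d : A → A → ℝ) (hdself : ∀ a, d a a = 0) :
    expDist d (fun q : A × A => if q.1 = q.2 then P q.1 else 0) = 0 := by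
  unfold expDist
  refine Finset.sum_eq_zero fun q _ => ?_
  dsimp only; split
  · rename_i h; rw [h, hdself, mul_zero]
  · rw [zero_mul]

/-- Mixture of couplings. -/
lemma mix_coupling {t : ℝ} (ht0 : 0 ≤ t) (ht1 : t ≤ 1) (d : A → A → ℝ)
    {Q1 Q2 : A × A → ℝ} (h1 : IsPMF Q1) (h2 : IsPMF Q2) :
    IsPMF (fun q => (1 - t) * Q1 q + t * Q2 q)
    ∧ margX (fun q => (1 - t) * Q1 q + t * Q2 q)
        = (fun a => (1 - t) * margX Q1 a + t * margX Q2 a)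
    ∧ margY (fun q => (1 - t) * Q1 q + t * Q2 q)
        = (fun b => (1 - t) * margY Q1 b + t * margY Q2 b)
    ∧ expDist d (fun q => (1 - t) * Q1 q + t * Q2 q)
        = (1 - t) * expDist d Q1 + t * expDist d Q2 := by
  refine ⟨⟨fun q => add_nonneg (mul_nonneg (by linarith) (h1.1 q))
      (mul_nonneg ht0 (h2.1 q)), ?_⟩, ?_, ?_, ?_⟩
  · rw [Finset.sum_add_distrib, ← Finset.mul_sum, ← Finset.mul_sum, h1.2, h2.2]; ring
  · funext a; simp [margX, Finset.sum_add_distrib, Finset.mul_sum]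
  · funext b; simp [margY, Finset.sum_add_distrib, Finset.mul_sum]
  · unfold expDist
    rw [Finset.mul_sum, Finset.mul_sum, ← Finset.sum_add_distrib]
    exact Finset.sum_congr rfl fun q _ => by ring

end EMDAux

/-- Corollary 2, first part: explicit minimization of the EMD under an
EMD constraint, metric case. -/
theorem emd_min_under_emd_constraint
    {A : Type} [Fintype A] [Nonempty A]
    (d : A → A → ℝ) (hd : ∀ a b, 0 ≤ d a b)
    (hdeq : ∀ a b, d a b = 0 ↔ a = b)
    (hdsymm : ∀ a b, d a b = d b a)
    (hdtri : ∀ a b c, d a c ≤ d a b + d b c)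
    (P0 P : A → ℝ) (hP0 : IsPMF P0) (hP : IsPMF P)
    (Δ0 : ℝ) (hΔ0 : 0 ≤ Δ0) :
    sInf {v | ∃ PY : A → ℝ, IsPMF PY ∧ EMD d PY P0 ≤ Δ0 ∧ v = EMD d PY P}
      = max (EMD d P0 P - Δ0) 0 := by
  classical
  have hdself : ∀ a, d a a = 0 := fun a => (hdeq a a).2 rfl
  set D := EMD d P0 P with hD
  have hDnn : 0 ≤ D := EMD_nonneg d hd P0 P
  set S : Set ℝ := {v | ∃ PY : A → ℝ, IsPMF PY ∧ EMD d PY P0 ≤ Δ0 ∧ v = EMD d PY P}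
    with hSdef
  obtain ⟨hdiagP0, hdXP0, hdYP0⟩ := diag_coupling hP0
  obtain ⟨hdiagP, hdXP, hdYP⟩ := diag_coupling hP
  have hEMDself0 : ∀ (Q : A → ℝ), IsPMF Q → EMD d Q Q ≤ 0 := by
    intro Q hQ
    obtain ⟨hdg, hdgX, hdgY⟩ := diag_coupling hQ
    calc EMD d Q Q ≤ expDist d (fun q : A × A => if q.1 = q.2 then Q q.1 else 0) :=
          EMD_le_cost d hd hdg hdgX hdgY
      _ = 0 := diag_cost d hdself
  have hSne : S.Nonempty :=
    ⟨EMD d P0 P, P0, hP0, (hEMDself0 P0 hP0).trans hΔ0, rfl⟩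
  have hSlb : ∀ v ∈ S, max (D - Δ0) 0 ≤ v := by
    rintro v ⟨PY, hPY, hYle, rfl⟩
    refine max_le ?_ (EMD_nonneg d hd PY P)
    have htri := EMD_triangle d hd hdtri hP0 hPY hP
    have hsym : EMD d P0 PY = EMD d PY P0 := EMD_symm d hdsymm P0 PY
    linarith
  refine le_antisymm ?_ (le_csInf hSne hSlb)
  refine le_of_forall_pos_le_add fun ε hε => ?_
  have hlt : sInf (emdSet d P0 P) < D + ε := by
    rw [← EMD_def]; linarith
  obtain ⟨c, hcmem, hclt⟩ := exists_lt_of_csInf_lt (emdSet_nonempty d hP0 hP) hlt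
  obtain ⟨R, hR, hRX, hRY, rfl⟩ := hcmem
  have hSbdd : BddBelow S := ⟨0, fun v hv => le_trans (le_max_right _ 0) (hSlb v hv)⟩
  have hDle : D ≤ expDist d R := EMD_le_cost d hd hR hRX hRY
  by_cases hc : expDist d R ≤ Δ0
  · -- take PY = P
    have hPP0 : EMD d P P0 ≤ Δ0 := by
      rw [← EMD_symm d hdsymm P0 P]
      exact hDle.trans hc
    have hmem : EMD d P P ∈ S := ⟨P, hP, hPP0, rfl⟩
    calc sInf S ≤ EMD d P P := csInf_le hSbdd hmem
      _ ≤ 0 := hEMDself0 P hP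
      _ ≤ max (D - Δ0) 0 + ε := by positivity
  · push_neg at hc
    set c := expDist d R with hc'
    have hc0 : 0 < c := lt_of_le_of_lt hΔ0 hc
    set t := Δ0 / c with ht
    have ht0 : 0 ≤ t := div_nonneg hΔ0 hc0.le
    have ht1 : t ≤ 1 := (div_le_one hc0).2 hc.le
    have htc : t * c = Δ0 := div_mul_cancel₀ Δ0 hc0.ne'
    set PY : A → ℝ := fun a => (1 - t) * P0 a + t * P a with hPYdef
    -- coupling 1 : (P0, PY)
    obtain ⟨hm1, hm1X, hm1Y, hm1c⟩ :=
      mix_coupling ht0 ht1 d hdiagP0 hR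
    have hm1X' : margX (fun q => (1 - t) * (if q.1 = q.2 then P0 q.1 else 0) + t * R q)
        = P0 := by
      rw [hm1X, hdXP0, hRX]; funext a; ring
    have hm1Y' : margY (fun q => (1 - t) * (if q.1 = q.2 then P0 q.1 else 0) + t * R q)
        = PY := by
      rw [hm1Y, hdYP0, hRY]
    have hm1c' : expDist d (fun q => (1 - t) * (if q.1 = q.2 then P0 q.1 else 0) + t * R q)
        = Δ0 := by
      rw [hm1c, diag_cost d hdself, mul_zero, zero_add, htc]
    -- coupling 2 : (PY, P)
    obtain ⟨hm2, hm2X, hm2Y, hm2c⟩ :=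
      mix_coupling ht0 ht1 d hR hdiagP
    have hm2X' : margX (fun q => (1 - t) * R q + t * (if q.1 = q.2 then P q.1 else 0))
        = PY := by
      rw [hm2X, hdXP, hRX]
    have hm2Y' : margY (fun q => (1 - t) * R q + t * (if q.1 = q.2 then P q.1 else 0))
        = P := by
      rw [hm2Y, hdYP, hRY]; funext b; ring
    have hm2c' : expDist d (fun q => (1 - t) * R q + t * (if q.1 = q.2 then P q.1 else 0))
        = c - Δ0 := by
      rw [hm2c, diag_cost d hdself, mul_zero, add_zero, ← hc']
      linarith [htc]
    have hPYpmf : IsPMF PY := by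
      constructor
      · intro a
        exact add_nonneg (mul_nonneg (by linarith) (hP0.1 a)) (mul_nonneg ht0 (hP.1 a))
      · rw [hPYdef]
        dsimp only
        rw [Finset.sum_add_distrib, ← Finset.mul_sum, ← Finset.mul_sum, hP0.2, hP.2]
        ring
    have hPYP0 : EMD d PY P0 ≤ Δ0 := by
      rw [← EMD_symm d hdsymm P0 PY]
      calc EMD d P0 PY ≤ _ := EMD_le_cost d hd hm1 hm1X' hm1Y'
        _ = Δ0 := hm1c'
    have hPYP : EMD d PY P ≤ c - Δ0 := by
      calc EMD d PY P ≤ _ := EMD_le_cost d hd hm2 hm2X' hm2Y'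
        _ = c - Δ0 := hm2c'
    have hmem : EMD d PY P ∈ S := ⟨PY, hPYpmf, hPYP0, rfl⟩
    calc sInf S ≤ EMD d PY P := csInf_le hSbdd hmem
      _ ≤ c - Δ0 := hPYP
      _ ≤ D + ε - Δ0 := by linarith
      _ ≤ max (D - Δ0) 0 + ε := by
          have := le_max_left (D - Δ0) 0
          linarith
end
end

section
/- (Corollary 2, second part: the indistinguishability region in the metric case.) Let A be a nonempty finite set and let d : A × A → ℝ be a metric on A (nonnegative, d(a,b) = 0 iff a = b, symmetric, satisfying the triangle inequality). Let P_0, P be PMFs on A and Δ_0, Δ_1 ≥ 0. Then there exists a PMF P_Y on A with EMD_d(P_Y, P_0) ≤ Δ_0 and EMD_d(P_Y, P) ≤ Δ_1 if and only if EMD_d(P_0, P) ≤ Δ_0 + Δ_1. -/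
open scoped Classical
open Finset Filter

noncomputable section

section EMDhelpers

variable {A : Type} [Fintype A]

lemma emd_bdd (d : A → A → ℝ) (hd : ∀ a b, 0 ≤ d a b) (P P' : A → ℝ) :
    BddBelow {v | ∃ R : A × A → ℝ,
      IsPMF R ∧ margX R = P ∧ margY R = P' ∧ v = expDist d R} := by
  refine ⟨0, ?_⟩
  rintro v ⟨R, hR, -, -, rfl⟩
  exact Finset.sum_nonneg fun q _ => mul_nonneg (hR.1 q) (hd q.1 q.2)

lemma emd_le {d : A → A → ℝ} (hd : ∀ a b, 0 ≤ d a b) {P P' : A → ℝ} {R : A × A → ℝ}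
    (h1 : IsPMF R) (h2 : margX R = P) (h3 : margY R = P') :
    EMD d P P' ≤ expDist d R :=
  csInf_le (emd_bdd d hd P P') ⟨R, h1, h2, h3, rfl⟩

lemma emd_set_nonempty (d : A → A → ℝ) {P P' : A → ℝ} (hP : IsPMF P) (hP' : IsPMF P') :
    {v | ∃ R : A × A → ℝ,
      IsPMF R ∧ margX R = P ∧ margY R = P' ∧ v = expDist d R}.Nonempty := by
  refine ⟨expDist d (fun q => P q.1 * P' q.2), fun q => P q.1 * P' q.2, ?_, ?_, ?_, rfl⟩
  · constructor
    · exact fun q => mul_nonneg (hP.1 q.1) (hP'.1 q.2)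
    · rw [Fintype.sum_prod_type]
      simp only [← Finset.mul_sum, hP'.2, mul_one]
      exact hP.2
  · funext a
    simp only [margX, ← Finset.mul_sum, hP'.2, mul_one]
  · funext b
    simp only [margY, ← Finset.sum_mul, hP.2, one_mul]

lemma emd_exists_coupling (d : A → A → ℝ) {P P' : A → ℝ} (hP : IsPMF P) (hP' : IsPMF P')
    {c : ℝ} (hc : EMD d P P' < c) :
    ∃ R : A × A → ℝ, IsPMF R ∧ margX R = P ∧ margY R = P' ∧ expDist d R < c := by
  obtain ⟨v, ⟨R, h1, h2, h3, rfl⟩, hv⟩ :=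
    exists_lt_of_csInf_lt (emd_set_nonempty d hP hP') hc
  exact ⟨R, h1, h2, h3, hv⟩

lemma marg_zero {R : A × A → ℝ} (hR : ∀ q, 0 ≤ R q) {PY : A → ℝ} (h : margX R = PY)
    {a : A} (ha : PY a = 0) (b : A) : R (a, b) = 0 := by
  have hsum : ∑ b', R (a, b') = 0 := by rw [← ha, ← h]; rfl
  have := (Finset.sum_eq_zero_iff_of_nonneg (fun b' _ => hR (a, b'))).1 hsum
  exact this b (Finset.mem_univ b)

/-- Gluing lemma: the triangle inequality step for EMD via couplings. -/
lemma emd_glue (d : A → A → ℝ) (hd : ∀ a b, 0 ≤ d a b) (hdsymm : ∀ a b, d a b = d b a)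
    (hdtri : ∀ a b c, d a c ≤ d a b + d b c)
    (PY P0 P : A → ℝ) (R0 R1 : A × A → ℝ)
    (h0 : IsPMF R0) (h0X : margX R0 = PY) (h0Y : margY R0 = P0)
    (h1 : IsPMF R1) (h1X : margX R1 = PY) (h1Y : margY R1 = P) :
    EMD d P0 P ≤ expDist d R0 + expDist d R1 := by
  set g : A → A → A → ℝ := fun a b c =>
    if PY a = 0 then 0 else R0 (a, b) * R1 (a, c) / PY a with hg
  have hPYnn : ∀ a, 0 ≤ PY a := by
    intro a; rw [← h0X]; exact Finset.sum_nonneg fun b _ => h0.1 (a, b)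
  have hgnn : ∀ a b c, 0 ≤ g a b c := by
    intro a b c
    by_cases h : PY a = 0
    · simp [hg, h]
    · simp only [hg, if_neg h]
      exact div_nonneg (mul_nonneg (h0.1 (a, b)) (h1.1 (a, c))) (hPYnn a)
  have hsum_c : ∀ a b, ∑ c, g a b c = R0 (a, b) := by
    intro a b
    by_cases h : PY a = 0
    · simp only [hg, if_pos h, Finset.sum_const_zero]
      exact (marg_zero h0.1 h0X h b).symm
    · simp only [hg, if_neg h]
      rw [← Finset.sum_div, ← Finset.mul_sum]
      have : ∑ c, R1 (a, c) = PY a := by rw [← h1X]; rfl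
      rw [this, mul_div_assoc, div_self h, mul_one]
  have hsum_b : ∀ a c, ∑ b, g a b c = R1 (a, c) := by
    intro a c
    by_cases h : PY a = 0
    · simp only [hg, if_pos h, Finset.sum_const_zero]
      exact (marg_zero h1.1 h1X h c).symm
    · simp only [hg, if_neg h]
      rw [← Finset.sum_div, ← Finset.sum_mul]
      have : ∑ b, R0 (a, b) = PY a := by rw [← h0X]; rfl
      rw [this, div_eq_iff h]; ring
  set T : A × A → ℝ := fun q => ∑ a, g a q.1 q.2 with hT
  have hTX : margX T = P0 := by
    funext b
    simp only [margX, hT]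
    rw [Finset.sum_comm]
    simp only [hsum_c]
    rw [← h0Y]; rfl
  have hTY : margY T = P := by
    funext c
    simp only [margY, hT]
    rw [Finset.sum_comm]
    simp only [hsum_b]
    rw [← h1Y]; rfl
  have hTpmf : IsPMF T := by
    constructor
    · exact fun q => Finset.sum_nonneg fun a _ => hgnn a q.1 q.2
    · rw [Fintype.sum_prod_type]
      have : ∀ b, ∑ c, T (b, c) = P0 b := fun b => congrFun hTX b
      simp only [this]
      rw [← h0Y]
      simp only [margY]
      rw [Finset.sum_comm]
      rw [← Fintype.sum_prod_type]
      exact h0.2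
  have hcost : expDist d T ≤ expDist d R0 + expDist d R1 := by
    calc expDist d T = ∑ a, ∑ q : A × A, g a q.1 q.2 * d q.1 q.2 := by
          simp only [expDist, hT, Finset.sum_mul]
          exact Finset.sum_comm
      _ ≤ ∑ a, ∑ q : A × A, g a q.1 q.2 * (d q.1 a + d a q.2) := by
          refine Finset.sum_le_sum fun a _ => Finset.sum_le_sum fun q _ => ?_
          exact mul_le_mul_of_nonneg_left (hdtri q.1 a q.2) (hgnn a q.1 q.2)
      _ = (∑ a, ∑ q : A × A, g a q.1 q.2 * d q.1 a)
            + ∑ a, ∑ q : A × A, g a q.1 q.2 * d a q.2 := by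
          rw [← Finset.sum_add_distrib]
          congr 1; funext a
          rw [← Finset.sum_add_distrib]
          congr 1; funext q
          ring
      _ = expDist d R0 + expDist d R1 := by
          congr 1
          · calc ∑ a, ∑ q : A × A, g a q.1 q.2 * d q.1 a
                = ∑ a, ∑ b, (∑ c, g a b c) * d b a := by
                  congr 1; funext a
                  rw [Fintype.sum_prod_type]
                  congr 1; funext b
                  rw [Finset.sum_mul]
              _ = ∑ a, ∑ b, R0 (a, b) * d a b := by
                  simp only [hsum_c]
                  congr 1; funext a; congr 1; funext b
                  rw [hdsymm b a]
              _ = expDist d R0 := by rw [expDist, Fintype.sum_prod_type]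
          · calc ∑ a, ∑ q : A × A, g a q.1 q.2 * d a q.2
                = ∑ a, ∑ c, (∑ b, g a b c) * d a c := by
                  congr 1; funext a
                  rw [Fintype.sum_prod_type, Finset.sum_comm]
                  congr 1; funext c
                  rw [Finset.sum_mul]
              _ = expDist d R1 := by
                  simp only [hsum_b]
                  rw [expDist, Fintype.sum_prod_type]
  exact le_trans (emd_le hd hTpmf hTX hTY) hcost

end EMDhelpers

section Interp

variable {A : Type} [Fintype A]

lemma sum_diag_eq (f : A → ℝ) (b : A) : ∑ a, (if a = b then f a else 0) = f b := by
  simp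

lemma sum_diag_eq' (f : A → ℝ) (a : A) : ∑ b, (if a = b then f a else 0) = f a := by
  simp

/-- Interpolation: from a coupling of `P0` and `P`, bound the EMDs from the
mixture `(1-t)·P0 + t·P` to the endpoints. -/
lemma emd_interp (d : A → A → ℝ) (hd : ∀ a b, 0 ≤ d a b)
    (hrefl : ∀ a, d a a = 0) (hdsymm : ∀ a b, d a b = d b a)
    (P0 P : A → ℝ) (hP0 : IsPMF P0) (hP : IsPMF P)
    (R : A × A → ℝ) (hR : IsPMF R) (hX : margX R = P0) (hY : margY R = P)
    (t : ℝ) (ht0 : 0 ≤ t) (ht1 : t ≤ 1) :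
    EMD d (fun a => (1 - t) * P0 a + t * P a) P0 ≤ t * expDist d R ∧
    EMD d (fun a => (1 - t) * P0 a + t * P a) P ≤ (1 - t) * expDist d R := by
  have h1t : 0 ≤ 1 - t := by linarith
  have hswap : ∑ q : A × A, R (q.2, q.1) * d q.1 q.2 = expDist d R := by
    have := Equiv.sum_comp (Equiv.prodComm A A) (fun p : A × A => R p * d p.2 p.1)
    simp only [Equiv.prodComm_apply, Prod.swap] at this
    rw [this, expDist]
    congr 1; funext p; rw [hdsymm p.2 p.1]
  constructor
  · -- coupling between PY and P0
    set R0 : A × A → ℝ := fun q =>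
      (1 - t) * (if q.1 = q.2 then P0 q.1 else 0) + t * R (q.2, q.1) with hR0
    have hR0pmf : IsPMF R0 := by
      constructor
      · intro q
        apply add_nonneg
        · apply mul_nonneg h1t
          split
          · exact hP0.1 q.1
          · exact le_refl 0
        · exact mul_nonneg ht0 (hR.1 (q.2, q.1))
      · simp only [hR0, Fintype.sum_prod_type, Finset.sum_add_distrib,
          ← Finset.mul_sum]
        have e1 : ∑ a, ∑ b, (if a = b then P0 a else 0) = 1 := by
          simp [hP0.2]
        have e2 : ∑ a, ∑ b, R (b, a) = 1 := by
          rw [Finset.sum_comm, ← Fintype.sum_prod_type]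
          exact hR.2
        rw [e1, e2]; ring
    have hR0X : margX R0 = fun a => (1 - t) * P0 a + t * P a := by
      funext a
      simp only [margX, hR0, Finset.sum_add_distrib, ← Finset.mul_sum]
      have e1 : ∑ b, (if a = b then P0 a else 0) = P0 a := by simp
      have e2 : ∑ b, R (b, a) = P a := by rw [← hY]; rfl
      rw [e1, e2]
    have hR0Y : margY R0 = P0 := by
      funext b
      simp only [margY, hR0, Finset.sum_add_distrib, ← Finset.mul_sum]
      have e1 : ∑ a, (if a = b then P0 a else 0) = P0 b := by simp
      have e2 : ∑ a, R (b, a) = P0 b := by rw [← hX]; rfl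
      rw [e1, e2]; ring
    have hcost : expDist d R0 = t * expDist d R := by
      simp only [expDist, hR0, add_mul, Finset.sum_add_distrib, mul_assoc,
        ← Finset.mul_sum]
      have e1 : ∑ q : A × A, (if q.1 = q.2 then P0 q.1 else 0) * d q.1 q.2 = 0 := by
        apply Finset.sum_eq_zero
        intro q _
        by_cases h : q.1 = q.2
        · rw [if_pos h, h, hrefl, mul_zero]
        · rw [if_neg h, zero_mul]
      rw [e1, hswap, mul_zero, zero_add]
      rfl
    exact hcost ▸ emd_le hd hR0pmf hR0X hR0Y
  · -- coupling between PY and P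
    set R1 : A × A → ℝ := fun q =>
      (1 - t) * R q + t * (if q.1 = q.2 then P q.1 else 0) with hR1
    have hR1pmf : IsPMF R1 := by
      constructor
      · intro q
        apply add_nonneg
        · exact mul_nonneg h1t (hR.1 q)
        · apply mul_nonneg ht0
          split
          · exact hP.1 q.1
          · exact le_refl 0
      · simp only [hR1, Fintype.sum_prod_type, Finset.sum_add_distrib,
          ← Finset.mul_sum]
        have e1 : ∑ a, ∑ b, (if a = b then P a else 0) = 1 := by
          simp [hP.2]
        have e2 : ∑ a, ∑ b, R (a, b) = 1 := by
          rw [← Fintype.sum_prod_type]; exact hR.2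
        rw [e1, e2]; ring
    have hR1X : margX R1 = fun a => (1 - t) * P0 a + t * P a := by
      funext a
      simp only [margX, hR1, Finset.sum_add_distrib, ← Finset.mul_sum]
      have e1 : ∑ b, (if a = b then P a else 0) = P a := by simp
      have e2 : ∑ b, R (a, b) = P0 a := by rw [← hX]; rfl
      rw [e1, e2]
    have hR1Y : margY R1 = P := by
      funext b
      simp only [margY, hR1, Finset.sum_add_distrib, ← Finset.mul_sum]
      have e1 : ∑ a, (if a = b then P a else 0) = P b := by simp
      have e2 : ∑ a, R (a, b) = P b := by rw [← hY]; rfl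
      rw [e1, e2]; ring
    have hcost : expDist d R1 = (1 - t) * expDist d R := by
      simp only [expDist, hR1, add_mul, Finset.sum_add_distrib, mul_assoc,
        ← Finset.mul_sum]
      have e1 : ∑ q : A × A, (if q.1 = q.2 then P q.1 else 0) * d q.1 q.2 = 0 := by
        apply Finset.sum_eq_zero
        intro q _
        by_cases h : q.1 = q.2
        · rw [if_pos h, h, hrefl, mul_zero]
        · rw [if_neg h, zero_mul]
      rw [e1, mul_zero, add_zero]
    exact hcost ▸ emd_le hd hR1pmf hR1X hR1Y

end Interp

/-- Corollary 2, second part: the indistinguishability region in the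
metric case. -/
theorem indistinguishability_metric
    {A : Type} [Fintype A] [Nonempty A]
    (d : A → A → ℝ) (hd : ∀ a b, 0 ≤ d a b)
    (hdeq : ∀ a b, d a b = 0 ↔ a = b)
    (hdsymm : ∀ a b, d a b = d b a)
    (hdtri : ∀ a b c, d a c ≤ d a b + d b c)
    (P0 P : A → ℝ) (hP0 : IsPMF P0) (hP : IsPMF P)
    (Δ0 Δ1 : ℝ) (hΔ0 : 0 ≤ Δ0) (hΔ1 : 0 ≤ Δ1) :
    (∃ PY : A → ℝ, IsPMF PY ∧ EMD d PY P0 ≤ Δ0 ∧ EMD d PY P ≤ Δ1)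
      ↔ EMD d P0 P ≤ Δ0 + Δ1 := by
  have hrefl : ∀ a, d a a = 0 := fun a => (hdeq a a).2 rfl
  constructor
  · rintro ⟨PY, hPY, h0, h1⟩
    refine le_of_forall_pos_le_add fun ε hε => ?_
    obtain ⟨R0, hR0, hR0X, hR0Y, hc0⟩ :=
      emd_exists_coupling d hPY hP0 (lt_of_le_of_lt h0 (by linarith : Δ0 < Δ0 + ε / 2))
    obtain ⟨R1, hR1, hR1X, hR1Y, hc1⟩ :=
      emd_exists_coupling d hPY hP (lt_of_le_of_lt h1 (by linarith : Δ1 < Δ1 + ε / 2))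
    have := emd_glue d hd hdsymm hdtri PY P0 P R0 R1 hR0 hR0X hR0Y hR1 hR1X hR1Y
    linarith
  · intro h
    by_cases hs : Δ0 + Δ1 = 0
    · -- degenerate case: both budgets zero; take PY = P0
      have hΔ0' : Δ0 = 0 := by linarith
      have hΔ1' : Δ1 = 0 := by linarith
      refine ⟨P0, hP0, ?_, ?_⟩
      · -- EMD d P0 P0 ≤ 0 via diagonal coupling
        set Rdiag : A × A → ℝ := fun q => if q.1 = q.2 then P0 q.1 else 0 with hRd
        have hpmf : IsPMF Rdiag := by
          constructor
          · intro q
            simp only [hRd]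
            split
            · exact hP0.1 q.1
            · exact le_refl 0
          · simp only [hRd, Fintype.sum_prod_type]
            simp [hP0.2]
        have hXd : margX Rdiag = P0 := by
          funext a; simp [margX, hRd]
        have hYd : margY Rdiag = P0 := by
          funext b; simp [margY, hRd]
        have hcd : expDist d Rdiag = 0 := by
          apply Finset.sum_eq_zero
          intro q _
          simp only [hRd]
          by_cases hq : q.1 = q.2
          · rw [if_pos hq, hq, hrefl, mul_zero]
          · rw [if_neg hq, zero_mul]
        rw [hΔ0']
        exact hcd ▸ emd_le hd hpmf hXd hYd
      · rw [hΔ1']; rw [hs] at h; exact h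
    · have hspos : 0 < Δ0 + Δ1 := lt_of_le_of_ne (by linarith) (Ne.symm hs)
      set t : ℝ := Δ0 / (Δ0 + Δ1) with ht
      have ht0 : 0 ≤ t := div_nonneg hΔ0 (le_of_lt hspos)
      have ht1 : t ≤ 1 := by
        rw [ht, div_le_one hspos]; linarith
      have hta : t * (Δ0 + Δ1) = Δ0 := by
        rw [ht, div_mul_cancel₀]; exact hs
      have htb : (1 - t) * (Δ0 + Δ1) = Δ1 := by
        rw [sub_mul, one_mul, hta]; ring
      refine ⟨fun a => (1 - t) * P0 a + t * P a, ?_, ?_, ?_⟩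
      · constructor
        · intro a
          exact add_nonneg (mul_nonneg (by linarith) (hP0.1 a)) (mul_nonneg ht0 (hP.1 a))
        · rw [Finset.sum_add_distrib, ← Finset.mul_sum, ← Finset.mul_sum, hP0.2, hP.2]
          ring
      · refine le_of_forall_pos_le_add fun ε hε => ?_
        obtain ⟨R, hR, hX, hY, hc⟩ :=
          emd_exists_coupling d hP0 hP
            (lt_of_le_of_lt h (by linarith : Δ0 + Δ1 < Δ0 + Δ1 + ε))
        have hint := (emd_interp d hd hrefl hdsymm P0 P hP0 hP R hR hX hY t ht0 ht1).1
        have : t * expDist d R ≤ t * (Δ0 + Δ1 + ε) :=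
          mul_le_mul_of_nonneg_left (le_of_lt hc) ht0
        nlinarith
      · refine le_of_forall_pos_le_add fun ε hε => ?_
        obtain ⟨R, hR, hX, hY, hc⟩ :=
          emd_exists_coupling d hP0 hP
            (lt_of_le_of_lt h (by linarith : Δ0 + Δ1 < Δ0 + Δ1 + ε))
        have hint := (emd_interp d hd hrefl hdsymm P0 P hP0 hP R hR hX hY t ht0 ht1).2
        have : (1 - t) * expDist d R ≤ (1 - t) * (Δ0 + Δ1 + ε) :=
          mul_le_mul_of_nonneg_left (le_of_lt hc) (by linarith)
        nlinarith
end
end
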